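/- arXiv:1907.09129 — 3 statements merged into one kernel-verified Lean document; each statement's English description precedes it below -/
import Mathlib

section
/- Let α > 0 be a real number and let λ : ℕ → ℂ be a bounded arithmetic function. For n > 1 let p(n) denote the smallest prime divisor of n, P(n) the largest prime divisor of n, ω(n) the number of distinct prime divisors of n, and μ the Möbius function. Define S_{λ,α}(x) = Σ_{1 < n ≤ x} λ(ω(n)) (p(n)/P(n))^α, and for each integer i ≥ 1 define Σ^{(i)}(x) = Σ_{1 < n ≤ x, μ(n) ≠ 0, ω(n) = i} (p(n)/P(n))^α. Then for every constant A > 0, S_{λ,α}(x) = Σ_{i=1}^∞ λ(i) Σ^{(i)}(x) + O(x/(log x)^A) as x → ∞. -/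
open Filter Finset


-- basic facts about minFac and largest prime factor
lemma sup_mem_primeFactors {n : ℕ} (hn : 2 ≤ n) : n.primeFactors.sup id ∈ n.primeFactors := by
  have h : n.primeFactors.Nonempty := Nat.nonempty_primeFactors.mpr hn
  obtain ⟨p, hp, he⟩ := Finset.exists_mem_eq_sup _ h id
  rw [he]; exact hp

lemma minFac_le_sup {n : ℕ} (hn : 2 ≤ n) : n.minFac ≤ n.primeFactors.sup id := by
  have h := sup_mem_primeFactors hn
  rw [Nat.mem_primeFactors] at h
  exact Nat.minFac_le_of_dvd h.1.two_le h.2.1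

lemma two_le_sup {n : ℕ} (hn : 2 ≤ n) : 2 ≤ n.primeFactors.sup id := by
  have h := sup_mem_primeFactors hn
  rw [Nat.mem_primeFactors] at h
  exact h.1.two_le

lemma ratio_nonneg (α : ℝ) (n : ℕ) : 0 ≤ ((n.minFac : ℝ) / ((n.primeFactors.sup id : ℕ) : ℝ)) ^ α :=
  Real.rpow_nonneg (by positivity) _

lemma ratio_le_one {α : ℝ} (hα : 0 ≤ α) {n : ℕ} (hn : 2 ≤ n) :
    ((n.minFac : ℝ) / ((n.primeFactors.sup id : ℕ) : ℝ)) ^ α ≤ 1 := by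
  apply Real.rpow_le_one (by positivity)
  · rw [div_le_one (by exact_mod_cast Nat.lt_of_lt_of_le two_pos (two_le_sup hn))]
    exact_mod_cast minFac_le_sup hn
  · exact hα


lemma card_primeFactors_le' (n : ℕ) (hn : n ≠ 0) : n.primeFactors.card ≤ n := by
  calc n.primeFactors.card ≤ (Finset.Icc 1 n).card := by
        apply Finset.card_le_card
        intro p hp
        rw [Nat.mem_primeFactors] at hp
        exact Finset.mem_Icc.mpr ⟨hp.1.one_lt.le, Nat.le_of_dvd (Nat.pos_of_ne_zero hn) hp.2.1⟩
    _ = n := by rw [Nat.card_Icc]; omega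

lemma one_le_card_primeFactors {n : ℕ} (hn : 2 ≤ n) : 1 ≤ n.primeFactors.card :=
  Finset.card_pos.mpr (Nat.nonempty_primeFactors.mpr hn)

lemma tsum_part (α : ℝ) (lam : ℕ → ℂ) (N : ℕ) :
    (∑' i : ℕ, lam (i + 1) *
        (((∑ n ∈ (Finset.Icc 2 N).filter
              (fun n => Squarefree n ∧ n.primeFactors.card = i + 1),
            ((n.minFac : ℝ) / ((n.primeFactors.sup id : ℕ) : ℝ)) ^ α) : ℝ) : ℂ))
    = ∑ n ∈ (Finset.Icc 2 N).filter (fun n => Squarefree n),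
        lam n.primeFactors.card *
          ((((n.minFac : ℝ) / ((n.primeFactors.sup id : ℕ) : ℝ)) ^ α : ℝ) : ℂ) := by
  classical
  have hempty : ∀ i ∉ Finset.range (N + 1), lam (i + 1) *
      (((∑ n ∈ (Finset.Icc 2 N).filter
            (fun n => Squarefree n ∧ n.primeFactors.card = i + 1),
          ((n.minFac : ℝ) / ((n.primeFactors.sup id : ℕ) : ℝ)) ^ α) : ℝ) : ℂ) = 0 := by
    intro i hi
    rw [Finset.mem_range, not_lt] at hi
    have : (Finset.Icc 2 N).filter
        (fun n => Squarefree n ∧ n.primeFactors.card = i + 1) = ∅ := by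
      rw [Finset.filter_eq_empty_iff]
      rintro n hn ⟨-, hcard⟩
      rw [Finset.mem_Icc] at hn
      have h1 := card_primeFactors_le' n (by omega)
      omega
    rw [this]
    simp
  rw [tsum_eq_sum hempty]
  have hmaps : ∀ n ∈ (Finset.Icc 2 N).filter (fun n => Squarefree n),
      n.primeFactors.card - 1 ∈ Finset.range (N + 1) := by
    intro n hn
    rw [Finset.mem_filter, Finset.mem_Icc] at hn
    have := card_primeFactors_le' n (by omega)
    exact Finset.mem_range.mpr (by omega)
  refine Eq.trans (Finset.sum_congr rfl fun i _ => ?_)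
    (Finset.sum_fiberwise_of_maps_to hmaps
      (fun n => lam n.primeFactors.card *
        ((((n.minFac : ℝ) / ((n.primeFactors.sup id : ℕ) : ℝ)) ^ α : ℝ) : ℂ)))
  have hset : ((Finset.Icc 2 N).filter (fun n => Squarefree n)).filter
      (fun n => n.primeFactors.card - 1 = i)
      = (Finset.Icc 2 N).filter (fun n => Squarefree n ∧ n.primeFactors.card = i + 1) := by
    rw [Finset.filter_filter]
    apply Finset.filter_congr
    intro n hn
    rw [Finset.mem_Icc] at hn
    have := one_le_card_primeFactors (n := n) (by omega)
    constructor
    · rintro ⟨hs, hc⟩; exact ⟨hs, by omega⟩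
    · rintro ⟨hs, hc⟩; exact ⟨hs, by omega⟩
  rw [hset]
  push_cast [Finset.mul_sum]
  refine Finset.sum_congr rfl fun n hn => ?_
  rw [Finset.mem_filter] at hn
  rw [hn.2.2]


lemma sum_inv_sq_le_aux (w : ℕ) (hw : 1 ≤ w) :
    ∀ M : ℕ, ∑ q ∈ Finset.Icc (w + 1) M, (1 : ℝ) / (q * q) ≤
      1 / w - 1 / ((max M w : ℕ) : ℝ) := by
  intro M
  induction M with
  | zero =>
    rw [Finset.Icc_eq_empty (by omega)]
    rw [max_eq_right (by omega : 0 ≤ w)]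
    simp
  | succ M ih =>
    by_cases hM : w + 1 ≤ M + 1
    · rw [Finset.sum_Icc_succ_top hM]
      have hmax : max (M + 1) w = M + 1 := by omega
      have hmaxM : max M w = M ∨ max M w = w := max_choice _ _
      have hMw : w ≤ M := by omega
      have hmaxM' : max M w = M := by omega
      rw [hmaxM'] at ih
      rw [hmax]
      have hM1 : (1 : ℝ) ≤ (M : ℝ) := by exact_mod_cast hw.trans hMw
      have hstep : (1 : ℝ) / ((M + 1 : ℕ) * (M + 1 : ℕ)) ≤ 1 / (M : ℝ) - 1 / ((M + 1 : ℕ) : ℝ) := by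
        push_cast
        rw [div_sub_div _ _ (by linarith) (by linarith), div_le_div_iff₀ (by nlinarith) (by nlinarith)]
        nlinarith
      push_cast at ih hstep ⊢
      linarith
    · rw [Finset.Icc_eq_empty (by omega)]
      have h1 : max (M + 1) w = w := by omega
      rw [h1]
      simp
lemma sum_inv_sq_le (w : ℕ) (hw : 2 ≤ w) (M : ℕ) :
    ∑ q ∈ Finset.Icc w M, (1 : ℝ) / (q * q) ≤ 2 / w := by
  have h := sum_inv_sq_le_aux (w - 1) (by omega) M
  have hww : w - 1 + 1 = w := by omega
  rw [hww] at h
  have h2 : (0:ℝ) ≤ 1 / ((max M (w-1) : ℕ) : ℝ) := by positivity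
  have h3 : (1:ℝ) / ((w - 1 : ℕ) : ℝ) ≤ 2 / w := by
    have hcast : ((w - 1 : ℕ) : ℝ) = (w : ℝ) - 1 := by
      push_cast [Nat.cast_sub (by omega : 1 ≤ w)]; ring
    rw [hcast, div_le_div_iff₀ (by
      have : (2:ℝ) ≤ (w:ℝ) := by exact_mod_cast hw
      linarith) (by positivity)]
    have : (2:ℝ) ≤ (w:ℝ) := by exact_mod_cast hw
    linarith
  calc ∑ q ∈ Finset.Icc w M, (1 : ℝ) / (q * q)
      ≤ 1 / ((w - 1 : ℕ) : ℝ) - 1 / ((max M (w-1) : ℕ) : ℝ) := h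
    _ ≤ 1 / ((w - 1 : ℕ) : ℝ) := by linarith
    _ ≤ 2 / w := h3



open scoped Classical in
lemma card_sq_divisible_le (w N : ℕ) (hw : 2 ≤ w) :
    (((Finset.Ioc 0 N).filter (fun n => ∃ q : ℕ, q.Prime ∧ w ≤ q ∧ q * q ∣ n)).card : ℝ)
      ≤ N * (2 / w) := by
  classical
  have hsub : (Finset.Ioc 0 N).filter (fun n => ∃ q : ℕ, q.Prime ∧ w ≤ q ∧ q * q ∣ n)
      ⊆ (Finset.Icc w N).biUnion (fun q => (Finset.Ioc 0 N).filter (fun n => q * q ∣ n)) := by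
    intro n hn
    rw [Finset.mem_filter, Finset.mem_Ioc] at hn
    obtain ⟨⟨hn0, hnN⟩, q, hq, hwq, hdvd⟩ := hn
    refine Finset.mem_biUnion.mpr ⟨q, Finset.mem_Icc.mpr ⟨hwq, ?_⟩, ?_⟩
    · calc q ≤ q * q := Nat.le_mul_of_pos_left q (by omega)
        _ ≤ n := Nat.le_of_dvd hn0 hdvd
        _ ≤ N := hnN
    · exact Finset.mem_filter.mpr ⟨Finset.mem_Ioc.mpr ⟨hn0, hnN⟩, hdvd⟩
  have h1 : (((Finset.Ioc 0 N).filter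
        (fun n => ∃ q : ℕ, q.Prime ∧ w ≤ q ∧ q * q ∣ n)).card : ℝ)
      ≤ ∑ q ∈ Finset.Icc w N, ((N / (q * q) : ℕ) : ℝ) := by
    have := Finset.card_le_card hsub
    have h2 := Finset.card_biUnion_le (s := Finset.Icc w N)
      (t := fun q => (Finset.Ioc 0 N).filter (fun n => q * q ∣ n))
    have h3 : ∀ q, ((Finset.Ioc 0 N).filter (fun n => q * q ∣ n)).card = N / (q * q) := by
      intro q
      exact Nat.Ioc_filter_dvd_card_eq_div N (q * q)
    calc (((Finset.Ioc 0 N).filter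
          (fun n => ∃ q : ℕ, q.Prime ∧ w ≤ q ∧ q * q ∣ n)).card : ℝ)
        ≤ (((Finset.Icc w N).biUnion
            (fun q => (Finset.Ioc 0 N).filter (fun n => q * q ∣ n))).card : ℝ) := by
          exact_mod_cast this
      _ ≤ ((∑ q ∈ Finset.Icc w N,
            ((Finset.Ioc 0 N).filter (fun n => q * q ∣ n)).card : ℕ) : ℝ) := by
          exact_mod_cast h2
      _ = ∑ q ∈ Finset.Icc w N, ((N / (q * q) : ℕ) : ℝ) := by
          push_cast
          exact Finset.sum_congr rfl fun q _ => by rw [h3 q]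
  calc (((Finset.Ioc 0 N).filter
        (fun n => ∃ q : ℕ, q.Prime ∧ w ≤ q ∧ q * q ∣ n)).card : ℝ)
      ≤ ∑ q ∈ Finset.Icc w N, ((N / (q * q) : ℕ) : ℝ) := h1
    _ ≤ ∑ q ∈ Finset.Icc w N, (N : ℝ) * (1 / (q * q)) := by
        refine Finset.sum_le_sum fun q hq => ?_
        rw [Finset.mem_Icc] at hq
        have hq0 : 0 < q := by omega
        calc ((N / (q * q) : ℕ) : ℝ) ≤ (N : ℝ) / ((q * q : ℕ) : ℝ) :=
              Nat.cast_div_le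
          _ = (N : ℝ) * (1 / (q * q)) := by push_cast; ring
    _ = (N : ℝ) * ∑ q ∈ Finset.Icc w N, (1 : ℝ) / (q * q) := by
        rw [Finset.mul_sum]
    _ ≤ (N : ℝ) * (2 / w) := by
        refine mul_le_mul_of_nonneg_left (sum_inv_sq_le w hw N) (by positivity)


noncomputable def rpowHom (σ : ℝ) : ℕ →* ℝ where
  toFun n := (n : ℝ) ^ (-σ)
  map_one' := by simp
  map_mul' m n := by
    push_cast
    exact Real.mul_rpow (Nat.cast_nonneg m) (Nat.cast_nonneg n)

lemma rankin (N k : ℕ) (hk : 3 ≤ k) (x : ℝ) (hx : 1 ≤ x) (hN : (N : ℝ) ≤ x) :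
    ((Nat.smoothNumbersUpTo N k).card : ℝ) ≤
      x * Real.exp (- Real.log x / (2 * Real.log k)) * (Real.exp 8 * (k : ℝ) ^ (8 : ℝ)) := by
  classical
  set σ : ℝ := 1 - 1 / (2 * Real.log k) with hσdef
  have h3k : (3:ℝ) ≤ (k:ℝ) := by exact_mod_cast hk
  have hlogk : 1 < Real.log k := by
    have h1 : Real.exp 1 < 3 := by
      have := Real.exp_one_lt_d9; linarith
    calc 1 = Real.log (Real.exp 1) := (Real.log_exp 1).symm
      _ < Real.log 3 := Real.log_lt_log (Real.exp_pos 1) h1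
      _ ≤ Real.log k := Real.log_le_log (by norm_num) h3k
  have hσhalf : (1:ℝ)/2 ≤ σ := by
    have h1 : 1 / (2 * Real.log k) ≤ 1/2 := by
      rw [div_le_div_iff₀ (by linarith) (by norm_num)]; linarith
    simp only [hσdef]; linarith
  have hσ1 : σ < 1 := by
    have : 0 < 1 / (2 * Real.log k) := by positivity
    simp only [hσdef]; linarith
  have hσ0 : 0 < σ := lt_of_lt_of_le one_half_pos hσhalf
  -- bound on f p for primes p < k
  have hfval : ∀ n : ℕ, (rpowHom σ) n = (n:ℝ) ^ (-σ) := fun n => rfl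
  have hfnonneg : ∀ n : ℕ, 0 ≤ (rpowHom σ) n := fun n => by
    rw [hfval]; positivity
  have hf2 : ∀ p : ℕ, 2 ≤ p → (rpowHom σ) p ≤ 3/4 := by
    intro p hp
    have hp2 : (2:ℝ) ≤ (p:ℝ) := by exact_mod_cast hp
    rw [hfval]
    have h1 : (p:ℝ) ^ (-σ) ≤ (2:ℝ) ^ (-σ) := by
      rw [Real.rpow_def_of_pos (by linarith), Real.rpow_def_of_pos (by norm_num)]
      apply Real.exp_le_exp.mpr
      have : Real.log 2 ≤ Real.log p := Real.log_le_log (by norm_num) hp2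
      nlinarith [Real.log_pos (by norm_num : (1:ℝ) < 2)]
    have h2 : (2:ℝ) ^ (-σ) ≤ (2:ℝ) ^ (-(1/2) : ℝ) := by
      apply Real.rpow_le_rpow_of_exponent_le (by norm_num)
      linarith
    have h3 : (2:ℝ) ^ (-(1/2) : ℝ) ≤ 3/4 := by
      rw [Real.rpow_neg (by norm_num), ← Real.sqrt_eq_rpow]
      have hs : (0:ℝ) < Real.sqrt 2 := Real.sqrt_pos.mpr (by norm_num)
      have hsq : Real.sqrt 2 ^ 2 = 2 := Real.sq_sqrt (by norm_num)
      rw [inv_le_iff_one_le_mul₀ hs]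
      nlinarith
    linarith
  have hf2p : ∀ p : ℕ, p.Prime → p < k → (rpowHom σ) p ≤ 2 / p := by
    intro p hp hpk
    have hp2 : (2:ℝ) ≤ (p:ℝ) := by exact_mod_cast hp.two_le
    have hp0 : (0:ℝ) < (p:ℝ) := by linarith
    rw [hfval]
    have hsplit : (p:ℝ) ^ (-σ) = (p:ℝ) ^ (-1 : ℝ) * (p:ℝ) ^ (1 - σ) := by
      rw [← Real.rpow_add hp0]; ring_nf
    have hps : (p:ℝ) ^ (1 - σ) ≤ 2 := by
      rw [Real.rpow_def_of_pos hp0]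
      have hlp : Real.log p ≤ Real.log k :=
        Real.log_le_log hp0 (by exact_mod_cast hpk.le)
      have h1σ : 1 - σ = 1 / (2 * Real.log k) := by simp [hσdef]
      have harg : Real.log p * (1 - σ) ≤ 1/2 := by
        rw [h1σ]
        rw [mul_one_div, div_le_div_iff₀ (by linarith) (by norm_num)]
        nlinarith [Real.log_nonneg (by linarith : (1:ℝ) ≤ p)]
      calc Real.exp (Real.log p * (1 - σ)) ≤ Real.exp (1/2) := Real.exp_le_exp.mpr harg
        _ ≤ Real.exp (Real.log 2) := Real.exp_le_exp.mpr (by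
            have := Real.log_two_gt_d9; linarith)
        _ = 2 := Real.exp_log (by norm_num)
    calc (p:ℝ) ^ (-σ) = (p:ℝ) ^ (-1 : ℝ) * (p:ℝ) ^ (1 - σ) := hsplit
      _ ≤ (p:ℝ) ^ (-1 : ℝ) * 2 := by
          apply mul_le_mul_of_nonneg_left hps (by positivity)
      _ = 2 / p := by rw [Real.rpow_neg_one]; ring
  have hflt : ∀ {p : ℕ}, p.Prime → ‖(rpowHom σ) p‖ < 1 := by
    intro p hp
    rw [hfval, Real.norm_eq_abs, abs_of_nonneg (by positivity)]
    apply Real.rpow_lt_one_of_one_lt_of_neg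
    · exact_mod_cast hp.one_lt
    · linarith
  -- Euler product
  obtain ⟨-, hhs⟩ :=
    EulerProduct.summable_and_hasSum_smoothNumbers_prod_primesBelow_geometric
      (f := rpowHom σ) hflt k
  -- sum over the finset of smooth numbers up to N is at most the product
  have hsum_le : ∑ n ∈ Nat.smoothNumbersUpTo N k, (rpowHom σ) n ≤
      ∏ p ∈ k.primesBelow, (1 - (rpowHom σ) p)⁻¹ := by
    have hsub : ∀ n ∈ Nat.smoothNumbersUpTo N k, n ∈ k.smoothNumbers := fun n hn =>
      (Nat.mem_smoothNumbersUpTo.mp hn).2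
    rw [← Finset.sum_filter_of_ne (f := fun n => (rpowHom σ) n)
      (p := fun n => n ∈ k.smoothNumbers) (fun n hn _ => hsub n hn)]
    rw [← Finset.sum_subtype_eq_sum_filter]
    exact sum_le_hasSum _ (fun m _ => hfnonneg m) hhs
  -- card bound
  have hcard : ((Nat.smoothNumbersUpTo N k).card : ℝ) ≤
      x ^ σ * ∑ n ∈ Nat.smoothNumbersUpTo N k, (rpowHom σ) n := by
    rw [Finset.mul_sum, Finset.card_eq_sum_ones, Nat.cast_sum]
    apply Finset.sum_le_sum
    intro n hn
    obtain ⟨hnN, hns⟩ := Nat.mem_smoothNumbersUpTo.mp hn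
    have hn0 : 0 < n := Nat.pos_of_ne_zero hns.1
    have hn0' : (0:ℝ) < n := by exact_mod_cast hn0
    have hnx : (n:ℝ) ≤ x := le_trans (by exact_mod_cast hnN) hN
    have h1 : (1:ℝ) ≤ (x / n) ^ σ := by
      apply Real.one_le_rpow _ hσ0.le
      rw [le_div_iff₀ hn0']; linarith
    have h2 : (x / n) ^ σ = x ^ σ * (rpowHom σ) n := by
      rw [hfval, Real.div_rpow (by linarith) hn0'.le, Real.rpow_neg hn0'.le, div_eq_mul_inv]
    push_cast
    rw [← h2]; exact h1
  -- product bound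
  have hprod : ∏ p ∈ k.primesBelow, (1 - (rpowHom σ) p)⁻¹ ≤ Real.exp 8 * (k:ℝ) ^ (8:ℝ) := by
    have hterm : ∀ p ∈ k.primesBelow, (1 - (rpowHom σ) p)⁻¹ ≤ Real.exp (8 / p) := by
      intro p hp
      rw [Nat.mem_primesBelow] at hp
      obtain ⟨hpk, hpp⟩ := hp
      have ht34 := hf2 p hpp.two_le
      have ht0 := hfnonneg p
      have h1t : (0:ℝ) < 1 - (rpowHom σ) p := by linarith
      have hp0 : (0:ℝ) < p := by exact_mod_cast hpp.pos
      calc (1 - (rpowHom σ) p)⁻¹ ≤ 1 + 4 * (rpowHom σ) p := by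
            rw [inv_le_iff_one_le_mul₀ h1t]
            nlinarith
        _ ≤ Real.exp (4 * (rpowHom σ) p) := by
            have := Real.add_one_le_exp (4 * (rpowHom σ) p); linarith
        _ ≤ Real.exp (8 / p) := by
            apply Real.exp_le_exp.mpr
            have := hf2p p hpp hpk
            have : 4 * (rpowHom σ) p ≤ 4 * (2 / p) := by linarith
            calc 4 * (rpowHom σ) p ≤ 4 * (2/p) := this
              _ = 8 / p := by ring
    calc ∏ p ∈ k.primesBelow, (1 - (rpowHom σ) p)⁻¹
        ≤ ∏ p ∈ k.primesBelow, Real.exp (8 / p) := by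
          apply Finset.prod_le_prod
          · intro p hp
            rw [Nat.mem_primesBelow] at hp
            have h34 := hf2 p hp.2.two_le
            exact inv_nonneg.mpr (by linarith)
          · exact hterm
      _ = Real.exp (∑ p ∈ k.primesBelow, 8 / (p:ℝ)) := (Real.exp_sum _ _).symm
      _ ≤ Real.exp (8 * (1 + Real.log k)) := by
          apply Real.exp_le_exp.mpr
          have hsub : k.primesBelow ⊆ Finset.Icc 1 k := by
            intro p hp
            rw [Nat.mem_primesBelow] at hp
            exact Finset.mem_Icc.mpr ⟨hp.2.one_lt.le, hp.1.le⟩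
          calc ∑ p ∈ k.primesBelow, 8 / (p:ℝ)
              ≤ ∑ p ∈ Finset.Icc 1 k, 8 / (p:ℝ) := by
                apply Finset.sum_le_sum_of_subset_of_nonneg hsub
                intro i _ _; positivity
            _ = 8 * ∑ p ∈ Finset.Icc 1 k, ((p:ℝ))⁻¹ := by
                rw [Finset.mul_sum]; exact Finset.sum_congr rfl fun p _ => by ring
            _ ≤ 8 * (1 + Real.log k) := by
                have h1 : ∑ p ∈ Finset.Icc 1 k, ((p:ℝ))⁻¹ = ((harmonic k : ℚ) : ℝ) := by
                  rw [harmonic_eq_sum_Icc]; push_cast; rfl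
                rw [h1]
                have := harmonic_le_one_add_log k
                linarith
      _ = Real.exp 8 * (k:ℝ) ^ (8:ℝ) := by
          rw [show (8:ℝ) * (1 + Real.log k) = 8 + Real.log k * 8 by ring, Real.exp_add,
            Real.rpow_def_of_pos (by linarith : (0:ℝ) < (k:ℝ))]
  -- x ^ σ = x * exp (- log x / (2 log k))
  have hxσ : x ^ σ = x * Real.exp (- Real.log x / (2 * Real.log k)) := by
    have hx0 : (0:ℝ) < x := by linarith
    rw [Real.rpow_def_of_pos hx0]
    have : Real.log x * σ = Real.log x + (- Real.log x / (2 * Real.log k)) := by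
      simp only [hσdef]; field_simp; ring
    rw [this, Real.exp_add, Real.exp_log hx0]
  calc ((Nat.smoothNumbersUpTo N k).card : ℝ)
      ≤ x ^ σ * ∑ n ∈ Nat.smoothNumbersUpTo N k, (rpowHom σ) n := hcard
    _ ≤ x ^ σ * ∏ p ∈ k.primesBelow, (1 - (rpowHom σ) p)⁻¹ := by
        apply mul_le_mul_of_nonneg_left hsum_le (Real.rpow_nonneg (by linarith) _)
    _ ≤ x ^ σ * (Real.exp 8 * (k:ℝ) ^ (8:ℝ)) := by
        apply mul_le_mul_of_nonneg_left hprod (Real.rpow_nonneg (by linarith) _)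
    _ = x * Real.exp (- Real.log x / (2 * Real.log k)) * (Real.exp 8 * (k:ℝ) ^ (8:ℝ)) := by
        rw [hxσ]

set_option maxHeartbeats 2000000 in
open scoped Classical in
lemma core (α A : ℝ) (hα : 0 < α) (hA : 0 < A) :
    ∀ᶠ x : ℝ in atTop,
      ∑ n ∈ (Finset.Icc 2 ⌊x⌋₊).filter (fun n => ¬ Squarefree n),
          ((n.minFac : ℝ) / ((n.primeFactors.sup id : ℕ) : ℝ)) ^ α
        ≤ 4 * (x / Real.log x ^ A) := by
  set K : ℝ := A + A / α + 1 with hK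
  have hK1 : 1 ≤ K := by
    have : 0 < A / α := div_pos hA hα
    simp only [hK]; linarith
  have hK0 : 0 < K := by linarith
  -- eventual conditions on L = log x
  have hev : ∀ᶠ L : ℝ in atTop, 2 ≤ L ∧ 2 ≤ L ^ A ∧ 3 ≤ L ^ K ∧ 1 ≤ Real.log L ∧
      (8 + (8 * K + 8 + A) * Real.log L) * (2 * (K + 1) * Real.log L) ≤ L := by
    have h2 : ∀ᶠ L : ℝ in atTop, 2 ≤ L := eventually_ge_atTop 2
    have hA2 : ∀ᶠ L : ℝ in atTop, 2 ≤ L ^ A :=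
      (tendsto_rpow_atTop hA).eventually_ge_atTop 2
    have hK3 : ∀ᶠ L : ℝ in atTop, 3 ≤ L ^ K :=
      (tendsto_rpow_atTop hK0).eventually_ge_atTop 3
    have hlog1 : ∀ᶠ L : ℝ in atTop, 1 ≤ Real.log L :=
      Real.tendsto_log_atTop.eventually_ge_atTop 1
    set D : ℝ := 16 * (K + 1) + 2 * (K + 1) * (8 * K + 8 + A) with hD
    have hD0 : 0 < D := by
      have : 0 < K + 1 := by linarith
      have : 0 < 8 * K + 8 + A := by linarith
      simp only [hD]; positivity
    have hlitt := isLittleO_log_rpow_rpow_atTop (2 : ℝ) (zero_lt_one (α := ℝ))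
    have hsmall : ∀ᶠ L : ℝ in atTop, Real.log L ^ (2:ℝ) ≤ (1 / D) * L := by
      have := hlitt.def (by positivity : (0:ℝ) < 1 / D)
      filter_upwards [this, eventually_ge_atTop (1:ℝ)] with L h hL1
      rw [Real.norm_eq_abs, Real.norm_eq_abs, Real.rpow_one] at h
      calc Real.log L ^ (2:ℝ) ≤ |Real.log L ^ (2:ℝ)| := le_abs_self _
        _ ≤ 1 / D * |L| := h
        _ = 1 / D * L := by rw [abs_of_nonneg (by linarith)]
    filter_upwards [h2, hA2, hK3, hlog1, hsmall] with L h1 h2' h3 h4 h5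
    refine ⟨h1, h2', h3, h4, ?_⟩
    have hsq : Real.log L ^ (2:ℝ) = Real.log L * Real.log L := by
      rw [show (2:ℝ) = ((2:ℕ):ℝ) by norm_num, Real.rpow_natCast]; ring
    rw [hsq] at h5
    set t := Real.log L
    have htt : t ≤ t * t := le_mul_of_one_le_left (by linarith) h4
    have expand : (8 + (8 * K + 8 + A) * t) * (2 * (K + 1) * t)
        = 16 * (K + 1) * t + 2 * (K + 1) * (8 * K + 8 + A) * (t * t) := by ring
    rw [expand]
    have hKp : (0:ℝ) < K + 1 := by linarith
    have hc2 : (0:ℝ) < 8 * K + 8 + A := by linarith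
    have h6 : 16 * (K + 1) * t ≤ 16 * (K + 1) * (t * t) :=
      mul_le_mul_of_nonneg_left htt (by positivity)
    have h7 : 16 * (K + 1) * (t * t) + 2 * (K + 1) * (8 * K + 8 + A) * (t * t)
        = D * (t * t) := by rw [hD]; ring
    have h8 : D * (t * t) ≤ D * (1 / D * L) := mul_le_mul_of_nonneg_left h5 hD0.le
    have h9 : D * (1 / D * L) = L := by field_simp
    linarith
  filter_upwards [Real.tendsto_log_atTop.eventually hev, eventually_ge_atTop (3:ℝ)]
    with x hx hx3
  obtain ⟨hL2, hLA2, hLK3, hlogL1, hE⟩ := hx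
  set L := Real.log x with hLdef
  have hL0 : (0:ℝ) < L := by linarith
  have hx1 : (1:ℝ) ≤ x := by linarith
  have hx0 : (0:ℝ) < x := by linarith
  set N := ⌊x⌋₊ with hN
  have hNx : (N:ℝ) ≤ x := Nat.floor_le hx0.le
  set w := ⌈L ^ A⌉₊ with hw
  set k := ⌈L ^ K⌉₊ with hk
  have hLA0 : (0:ℝ) < L ^ A := by linarith
  have hLK0 : (0:ℝ) < L ^ K := by linarith
  have hw2 : 2 ≤ w := by
    have : (2:ℝ) ≤ (w:ℝ) := le_trans hLA2 (Nat.le_ceil _)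
    exact_mod_cast this
  have hk3 : 3 ≤ k := by
    have : (3:ℝ) ≤ (k:ℝ) := le_trans hLK3 (Nat.le_ceil _)
    exact_mod_cast this
  have hwle : (w:ℝ) ≤ 2 * L ^ A := by
    have h1 : (w:ℝ) < L ^ A + 1 := Nat.ceil_lt_add_one hLA0.le
    linarith
  have hkge : L ^ K ≤ (k:ℝ) := Nat.le_ceil _
  have hwge : L ^ A ≤ (w:ℝ) := Nat.le_ceil _
  have hkle : (k:ℝ) ≤ L ^ (K + 1) := by
    have h1 : (k:ℝ) < L ^ K + 1 := Nat.ceil_lt_add_one hLK0.le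
    have h2 : L ^ (K + 1) = L ^ K * L := by
      rw [Real.rpow_add hL0, Real.rpow_one]
    nlinarith
  -- the ratio bound in case 3
  have hratio3 : (2 * L ^ A) / L ^ K ≤ L ^ (-(A/α)) := by
    have h1 : L ^ (-(A/α)) = L * L ^ (-(A/α) - 1) := by
      rw [← Real.rpow_one_add' hL0.le (by
        intro h
        have : (0:ℝ) < A / α := div_pos hA hα
        nlinarith [this])]
      ring_nf
    have h2 : (2 * L ^ A) / L ^ K = 2 * L ^ (-(A/α) - 1) := by
      rw [mul_div_assoc, ← Real.rpow_sub hL0]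
      congr 1
      congr 1
      rw [hK]; ring
    rw [h1, h2]
    have h3 : (0:ℝ) ≤ L ^ (-(A/α) - 1) := Real.rpow_nonneg hL0.le _
    nlinarith
  -- pointwise bound
  have hpt : ∀ n ∈ (Finset.Icc 2 N).filter (fun n => ¬ Squarefree n),
      ((n.minFac : ℝ) / ((n.primeFactors.sup id : ℕ) : ℝ)) ^ α ≤
        (if ∃ q : ℕ, q.Prime ∧ w ≤ q ∧ q * q ∣ n then (1:ℝ) else 0)
        + (if n ∈ Nat.smoothNumbers k then (1:ℝ) else 0) + L ^ (-A) := by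
    intro n hn
    rw [Finset.mem_filter, Finset.mem_Icc] at hn
    obtain ⟨⟨hn2, hnN⟩, hnsq⟩ := hn
    have hLA : (0:ℝ) ≤ L ^ (-A) := Real.rpow_nonneg hL0.le _
    obtain ⟨q, hq, hqdvd⟩ : ∃ q : ℕ, q.Prime ∧ q * q ∣ n := by
      rw [Nat.squarefree_iff_prime_squarefree] at hnsq
      push_neg at hnsq
      obtain ⟨q, hq1, hq2⟩ := hnsq
      exact ⟨q, hq1, hq2⟩
    by_cases hqw : w ≤ q
    · rw [if_pos ⟨q, hq, hqw, hqdvd⟩]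
      have := ratio_le_one hα.le hn2
      have h0 : (0:ℝ) ≤ if n ∈ Nat.smoothNumbers k then (1:ℝ) else 0 := by positivity
      linarith
    · push_neg at hqw
      have hminq : n.minFac ≤ q :=
        Nat.minFac_le_of_dvd hq.two_le (dvd_trans (Dvd.intro q rfl) hqdvd)
      by_cases hsm : n.primeFactors.sup id < k
      · have hmem : n ∈ Nat.smoothNumbers k := by
          rw [Nat.mem_smoothNumbers]
          refine ⟨by omega, fun p hp => ?_⟩
          rw [← Nat.mem_primeFactors_iff_mem_primeFactorsList] at hp
          calc p = id p := rfl
            _ ≤ n.primeFactors.sup id := Finset.le_sup hp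
            _ < k := hsm
        rw [if_pos hmem]
        have := ratio_le_one hα.le hn2
        have h0 : (0:ℝ) ≤ if ∃ q : ℕ, q.Prime ∧ w ≤ q ∧ q * q ∣ n then (1:ℝ) else 0 := by
          positivity
        linarith
      · push_neg at hsm
        have hfn : ((n.minFac : ℝ) / ((n.primeFactors.sup id : ℕ) : ℝ)) ^ α ≤ L ^ (-A) := by
          have hsup0 : (0:ℝ) < ((n.primeFactors.sup id : ℕ) : ℝ) := by
            have := two_le_sup hn2
            exact_mod_cast lt_of_lt_of_le two_pos this
          have hrat : ((n.minFac : ℝ) / ((n.primeFactors.sup id : ℕ) : ℝ)) ≤ L ^ (-(A/α)) := by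
            have hnum : (n.minFac : ℝ) ≤ 2 * L ^ A := by
              have h1 : (n.minFac : ℝ) ≤ (q:ℝ) := by exact_mod_cast hminq
              have h2 : (q:ℝ) ≤ (w:ℝ) := by exact_mod_cast hqw.le
              linarith
            have hden : L ^ K ≤ ((n.primeFactors.sup id : ℕ) : ℝ) := by
              have h1 : (k:ℝ) ≤ ((n.primeFactors.sup id : ℕ) : ℝ) := by exact_mod_cast hsm
              linarith
            calc ((n.minFac : ℝ) / ((n.primeFactors.sup id : ℕ) : ℝ))
                ≤ (2 * L ^ A) / L ^ K := by
                  apply div_le_div₀ (by positivity) hnum hLK0 hden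
              _ ≤ L ^ (-(A/α)) := hratio3
          calc ((n.minFac : ℝ) / ((n.primeFactors.sup id : ℕ) : ℝ)) ^ α
              ≤ (L ^ (-(A/α))) ^ α := Real.rpow_le_rpow (by positivity) hrat hα.le
            _ = L ^ (-A) := by
                rw [← Real.rpow_mul hL0.le]
                congr 1
                field_simp
        have h0 : (0:ℝ) ≤ if ∃ q : ℕ, q.Prime ∧ w ≤ q ∧ q * q ∣ n then (1:ℝ) else 0 := by
          positivity
        have h0' : (0:ℝ) ≤ if n ∈ Nat.smoothNumbers k then (1:ℝ) else 0 := by positivity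
        linarith
  -- summation
  set t := (Finset.Icc 2 N).filter (fun n => ¬ Squarefree n) with ht
  have hsum : ∑ n ∈ t, ((n.minFac : ℝ) / ((n.primeFactors.sup id : ℕ) : ℝ)) ^ α
      ≤ ((t.filter (fun n => ∃ q : ℕ, q.Prime ∧ w ≤ q ∧ q * q ∣ n)).card : ℝ)
        + ((t.filter (fun n => n ∈ Nat.smoothNumbers k)).card : ℝ)
        + (t.card : ℝ) * L ^ (-A) := by
    calc ∑ n ∈ t, ((n.minFac : ℝ) / ((n.primeFactors.sup id : ℕ) : ℝ)) ^ α
        ≤ ∑ n ∈ t, ((if ∃ q : ℕ, q.Prime ∧ w ≤ q ∧ q * q ∣ n then (1:ℝ) else 0)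
            + (if n ∈ Nat.smoothNumbers k then (1:ℝ) else 0) + L ^ (-A)) :=
          Finset.sum_le_sum hpt
      _ = ((t.filter (fun n => ∃ q : ℕ, q.Prime ∧ w ≤ q ∧ q * q ∣ n)).card : ℝ)
          + ((t.filter (fun n => n ∈ Nat.smoothNumbers k)).card : ℝ)
          + (t.card : ℝ) * L ^ (-A) := by
          rw [Finset.sum_add_distrib, Finset.sum_add_distrib, Finset.sum_boole,
            Finset.sum_boole, Finset.sum_const, nsmul_eq_mul]
  -- bound each of the three pieces by x * L^(-A) (first by 2 * x * L^(-A))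
  have hP1 : ((t.filter (fun n => ∃ q : ℕ, q.Prime ∧ w ≤ q ∧ q * q ∣ n)).card : ℝ)
      ≤ 2 * (x * L ^ (-A)) := by
    have hsub : t.filter (fun n => ∃ q : ℕ, q.Prime ∧ w ≤ q ∧ q * q ∣ n)
        ⊆ (Finset.Ioc 0 N).filter (fun n => ∃ q : ℕ, q.Prime ∧ w ≤ q ∧ q * q ∣ n) := by
      apply Finset.filter_subset_filter
      intro n hn
      rw [ht, Finset.mem_filter, Finset.mem_Icc] at hn
      rw [Finset.mem_Ioc]
      omega
    calc ((t.filter (fun n => ∃ q : ℕ, q.Prime ∧ w ≤ q ∧ q * q ∣ n)).card : ℝ)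
        ≤ (((Finset.Ioc 0 N).filter
            (fun n => ∃ q : ℕ, q.Prime ∧ w ≤ q ∧ q * q ∣ n)).card : ℝ) := by
          exact_mod_cast Finset.card_le_card hsub
      _ ≤ (N:ℝ) * (2 / w) := card_sq_divisible_le w N hw2
      _ ≤ x * (2 / L ^ A) := by
          apply mul_le_mul hNx _ (by positivity) hx0.le
          apply div_le_div_of_nonneg_left (by norm_num) hLA0 hwge
      _ = 2 * (x * L ^ (-A)) := by
          rw [Real.rpow_neg hL0.le]
          field_simp
  have hP2 : ((t.filter (fun n => n ∈ Nat.smoothNumbers k)).card : ℝ) ≤ x * L ^ (-A) := by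
    have hsub : t.filter (fun n => n ∈ Nat.smoothNumbers k) ⊆ Nat.smoothNumbersUpTo N k := by
      intro n hn
      rw [Finset.mem_filter, ht, Finset.mem_filter, Finset.mem_Icc] at hn
      exact Nat.mem_smoothNumbersUpTo.mpr ⟨hn.1.1.2, hn.2⟩
    have hlogk1 : (1:ℝ) < Real.log k := by
      have h3k : (3:ℝ) ≤ (k:ℝ) := by exact_mod_cast hk3
      have h1 : Real.exp 1 < 3 := by have := Real.exp_one_lt_d9; linarith
      calc (1:ℝ) = Real.log (Real.exp 1) := (Real.log_exp 1).symm
        _ < Real.log 3 := Real.log_lt_log (Real.exp_pos 1) h1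
        _ ≤ Real.log k := Real.log_le_log (by norm_num) h3k
    have hlogkle : Real.log k ≤ (K + 1) * Real.log L := by
      calc Real.log k ≤ Real.log (L ^ (K+1)) :=
            Real.log_le_log (by positivity) hkle
        _ = (K + 1) * Real.log L := Real.log_rpow hL0 _
    have hexp : Real.exp (- L / (2 * Real.log k)) * (Real.exp 8 * (k:ℝ) ^ (8:ℝ))
        ≤ L ^ (-A) := by
      have hkpow : (k:ℝ) ^ (8:ℝ) ≤ L ^ ((K+1) * 8) := by
        calc (k:ℝ) ^ (8:ℝ) ≤ (L ^ (K+1)) ^ (8:ℝ) :=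
              Real.rpow_le_rpow (by positivity) hkle (by norm_num)
          _ = L ^ ((K+1) * 8) := by rw [← Real.rpow_mul hL0.le]
      have hexp1 : Real.exp (- L / (2 * Real.log k))
          ≤ Real.exp (- (L / (2 * (K+1) * Real.log L))) := by
        apply Real.exp_le_exp.mpr
        rw [neg_div, neg_le_neg_iff]
        apply div_le_div_of_nonneg_left hL0.le (by linarith) (by nlinarith)
      calc Real.exp (- L / (2 * Real.log k)) * (Real.exp 8 * (k:ℝ) ^ (8:ℝ))
          ≤ Real.exp (- (L / (2 * (K+1) * Real.log L))) * (Real.exp 8 * L ^ ((K+1)*8)) := by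
            apply mul_le_mul hexp1 _ (by positivity) (by positivity)
            apply mul_le_mul_of_nonneg_left hkpow (by positivity)
        _ ≤ L ^ (-A) := by
            rw [Real.rpow_def_of_pos hL0 ((K+1)*8), Real.rpow_def_of_pos hL0 (-A),
              ← Real.exp_add, ← Real.exp_add]
            apply Real.exp_le_exp.mpr
            have hpos : (0:ℝ) < 2 * (K+1) * Real.log L := by nlinarith
            rw [← sub_nonneg]
            have key : 8 + (8*K+8+A) * Real.log L ≤ L / (2 * (K+1) * Real.log L) := by
              rw [le_div_iff₀ hpos]
              exact hE
            have hexpand : Real.log L * -A - (-(L / (2 * (K+1) * Real.log L)) + (8 + Real.log L * ((K+1)*8)))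
                = L / (2 * (K+1) * Real.log L) - (8 + (8*K+8+A) * Real.log L) := by ring
            linarith [hexpand, key]
      
    calc ((t.filter (fun n => n ∈ Nat.smoothNumbers k)).card : ℝ)
        ≤ ((Nat.smoothNumbersUpTo N k).card : ℝ) := by
          exact_mod_cast Finset.card_le_card hsub
      _ ≤ x * Real.exp (- Real.log x / (2 * Real.log k)) * (Real.exp 8 * (k:ℝ) ^ (8:ℝ)) :=
          rankin N k hk3 x hx1 hNx
      _ = x * (Real.exp (- L / (2 * Real.log k)) * (Real.exp 8 * (k:ℝ) ^ (8:ℝ))) := by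
          rw [← hLdef]; ring
      _ ≤ x * L ^ (-A) := mul_le_mul_of_nonneg_left hexp hx0.le
  have hP3 : (t.card : ℝ) * L ^ (-A) ≤ x * L ^ (-A) := by
    apply mul_le_mul_of_nonneg_right _ (Real.rpow_nonneg hL0.le _)
    calc (t.card : ℝ) ≤ ((Finset.Icc 2 N).card : ℝ) := by
          exact_mod_cast Finset.card_le_card (Finset.filter_subset _ _)
      _ ≤ (N:ℝ) := by
          rw [Nat.card_Icc]
          have : N + 1 - 2 ≤ N := by omega
          exact_mod_cast this
      _ ≤ x := hNx
  have hfinal : 2 * (x * L ^ (-A)) + x * L ^ (-A) + x * L ^ (-A) = 4 * (x / L ^ A) := by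
    rw [Real.rpow_neg hL0.le]
    field_simp
    ring
  calc ∑ n ∈ t, ((n.minFac : ℝ) / ((n.primeFactors.sup id : ℕ) : ℝ)) ^ α
      ≤ _ := hsum
    _ ≤ 2 * (x * L ^ (-A)) + x * L ^ (-A) + x * L ^ (-A) := by linarith
    _ = 4 * (x / L ^ A) := hfinal
set_option maxHeartbeats 1000000 in
/-- For `α > 0`, bounded `λ : ℕ → ℂ` and any `A > 0`,
`S_{λ,α}(x) = Σ_{i=1}^∞ λ(i) Σ^{(i)}(x) + O(x/(log x)^A)`, where
`Σ^{(i)}(x) = Σ_{1 < n ≤ x, n squarefree, ω(n)=i} (p(n)/P(n))^α`. -/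
theorem weighted_sum_eq_sum_over_squarefree_by_omega
    (α : ℝ) (hα : 0 < α) (lam : ℕ → ℂ) (C : ℝ)
    (hlam : ∀ n, ‖lam n‖ ≤ C) (A : ℝ) (hA : 0 < A) :
    (fun x : ℝ =>
        (∑ n ∈ Finset.Icc 2 ⌊x⌋₊,
            lam n.primeFactors.card *
              ((((n.minFac : ℝ) / ((n.primeFactors.sup id : ℕ) : ℝ)) ^ α : ℝ) : ℂ))
        - ∑' i : ℕ, lam (i + 1) *
            (((∑ n ∈ (Finset.Icc 2 ⌊x⌋₊).filter
                  (fun n => Squarefree n ∧ n.primeFactors.card = i + 1),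
                ((n.minFac : ℝ) / ((n.primeFactors.sup id : ℕ) : ℝ)) ^ α) : ℝ) : ℂ))
      =O[atTop] (fun x : ℝ => x / Real.log x ^ A) := by
  classical
  have hC0 : 0 ≤ C := le_trans (norm_nonneg _) (hlam 0)
  rw [Asymptotics.isBigO_iff]
  refine ⟨4 * C, ?_⟩
  filter_upwards [core α A hα hA, eventually_ge_atTop (3:ℝ),
    Real.tendsto_log_atTop.eventually_ge_atTop 1] with x hcore hx3 hlog1
  set N := ⌊x⌋₊ with hN
  -- rewrite the difference as the sum over non-squarefree n
  have hdiff :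
      (∑ n ∈ Finset.Icc 2 N,
          lam n.primeFactors.card *
            ((((n.minFac : ℝ) / ((n.primeFactors.sup id : ℕ) : ℝ)) ^ α : ℝ) : ℂ))
      - (∑' i : ℕ, lam (i + 1) *
          (((∑ n ∈ (Finset.Icc 2 N).filter
                (fun n => Squarefree n ∧ n.primeFactors.card = i + 1),
              ((n.minFac : ℝ) / ((n.primeFactors.sup id : ℕ) : ℝ)) ^ α) : ℝ) : ℂ))
      = ∑ n ∈ (Finset.Icc 2 N).filter (fun n => ¬ Squarefree n),
          lam n.primeFactors.card *
            ((((n.minFac : ℝ) / ((n.primeFactors.sup id : ℕ) : ℝ)) ^ α : ℝ) : ℂ) := by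
    rw [tsum_part α lam N]
    rw [← Finset.sum_filter_add_sum_filter_not (Finset.Icc 2 N) (fun n => Squarefree n)
      (fun n => lam n.primeFactors.card *
        ((((n.minFac : ℝ) / ((n.primeFactors.sup id : ℕ) : ℝ)) ^ α : ℝ) : ℂ))]
    ring
  rw [hdiff]
  have hbound : ‖∑ n ∈ (Finset.Icc 2 N).filter (fun n => ¬ Squarefree n),
      lam n.primeFactors.card *
        ((((n.minFac : ℝ) / ((n.primeFactors.sup id : ℕ) : ℝ)) ^ α : ℝ) : ℂ)‖
      ≤ C * ∑ n ∈ (Finset.Icc 2 N).filter (fun n => ¬ Squarefree n),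
          ((n.minFac : ℝ) / ((n.primeFactors.sup id : ℕ) : ℝ)) ^ α := by
    calc ‖∑ n ∈ (Finset.Icc 2 N).filter (fun n => ¬ Squarefree n),
        lam n.primeFactors.card *
          ((((n.minFac : ℝ) / ((n.primeFactors.sup id : ℕ) : ℝ)) ^ α : ℝ) : ℂ)‖
        ≤ ∑ n ∈ (Finset.Icc 2 N).filter (fun n => ¬ Squarefree n),
            ‖lam n.primeFactors.card *
              ((((n.minFac : ℝ) / ((n.primeFactors.sup id : ℕ) : ℝ)) ^ α : ℝ) : ℂ)‖ :=
          norm_sum_le _ _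
      _ ≤ ∑ n ∈ (Finset.Icc 2 N).filter (fun n => ¬ Squarefree n),
            C * ((n.minFac : ℝ) / ((n.primeFactors.sup id : ℕ) : ℝ)) ^ α := by
          apply Finset.sum_le_sum
          intro n hn
          rw [norm_mul, Complex.norm_real, Real.norm_eq_abs,
            abs_of_nonneg (ratio_nonneg α n)]
          apply mul_le_mul_of_nonneg_right _ (ratio_nonneg α n)
          exact hlam _
      _ = C * ∑ n ∈ (Finset.Icc 2 N).filter (fun n => ¬ Squarefree n),
            ((n.minFac : ℝ) / ((n.primeFactors.sup id : ℕ) : ℝ)) ^ α := by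
          rw [Finset.mul_sum]
  have hL0 : (0:ℝ) < Real.log x := by linarith
  have hx0 : (0:ℝ) < x := by linarith
  have hrhs : ‖x / Real.log x ^ A‖ = x / Real.log x ^ A := by
    rw [Real.norm_eq_abs, abs_of_nonneg]
    positivity
  rw [hrhs]
  calc ‖∑ n ∈ (Finset.Icc 2 N).filter (fun n => ¬ Squarefree n),
      lam n.primeFactors.card *
        ((((n.minFac : ℝ) / ((n.primeFactors.sup id : ℕ) : ℝ)) ^ α : ℝ) : ℂ)‖
      ≤ C * ∑ n ∈ (Finset.Icc 2 N).filter (fun n => ¬ Squarefree n),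
          ((n.minFac : ℝ) / ((n.primeFactors.sup id : ℕ) : ℝ)) ^ α := hbound
    _ ≤ C * (4 * (x / Real.log x ^ A)) := mul_le_mul_of_nonneg_left hcore hC0
    _ = 4 * C * (x / Real.log x ^ A) := by ring
end

section
/- Let α > 0 be a real number. For n > 1 let p(n) denote the smallest prime divisor of n, P(n) the largest prime divisor of n, and μ the Möbius function. Then for every constant A > 0, Σ_{1 < n ≤ x, μ(n) = 0} (p(n)/P(n))^α = O(x/(log x)^A) as x → ∞; that is, the contribution of non-squarefree integers is negligible to any power of log x. -/
open Filter Finset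

-- telescoping sum of 1/q^2
lemma sum_inv_sq_le_s4 (T : ℕ) (hT : 1 ≤ T) (N : ℕ) :
    ∑ q ∈ Icc (T+1) N, (1:ℝ)/(q:ℝ)^2 ≤ 1/(T:ℝ) := by
  rcases le_or_gt N T with h | h
  · rw [Finset.Icc_eq_empty (by omega)]
    simp only [Finset.sum_empty]
    positivity
  · have key : ∀ M : ℕ, T ≤ M → ∑ q ∈ Icc (T+1) M, (1:ℝ)/(q:ℝ)^2 ≤ 1/(T:ℝ) - 1/(M:ℝ) := by
      intro M hM
      induction M, hM using Nat.le_induction with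
      | base => rw [Finset.Icc_eq_empty (by omega)]; simp
      | succ M hM ih =>
        rw [Finset.sum_Icc_succ_top (by omega)]
        have h1 : (1:ℝ) ≤ (M:ℝ) := by exact_mod_cast hT.trans hM
        have h2 : (0:ℝ) < (M:ℝ) := by linarith
        have h3 : (0:ℝ) < ((M:ℕ):ℝ) + 1 := by linarith
        have : (1:ℝ)/((M+1:ℕ):ℝ)^2 ≤ 1/(M:ℝ) - 1/((M+1:ℕ):ℝ) := by
          push_cast
          rw [div_sub_div _ _ (by linarith) (by linarith)]
          rw [div_le_div_iff₀ (by positivity) (by positivity)]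
          ring_nf
          nlinarith
        have := ih
        push_cast at *
        linarith
    have h0 : (0:ℝ) < (T:ℝ) := by exact_mod_cast hT
    have hN : (0:ℝ) < (N:ℝ) := by exact_mod_cast hT.trans h.le
    have := key N h.le
    have : (1:ℝ)/(N:ℝ) ≥ 0 := by positivity
    linarith [key N h.le]

-- harmonic sum
lemma sum_inv_le_log (y : ℕ) : ∑ m ∈ Icc 2 y, (1:ℝ)/(m:ℝ) ≤ Real.log y := by
  induction y with
  | zero => simp
  | succ y ih =>
    rcases le_or_gt (y+1) 1 with h | h
    · have : y = 0 := by omega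
      subst this
      simp
    · rw [Finset.sum_Icc_succ_top (by omega)]
      have hy1 : (1:ℝ) ≤ (y:ℝ) := by exact_mod_cast Nat.lt_succ_iff.mp h
      have hy0 : (0:ℝ) < (y:ℝ) := by linarith
      have hstep : (1:ℝ)/((y+1:ℕ):ℝ) ≤ Real.log ((y+1:ℕ):ℝ) - Real.log y := by
        push_cast
        rw [← Real.log_div (by linarith) (by linarith)]
        have := Real.log_le_sub_one_of_pos (x := (y:ℝ)/((y:ℝ)+1)) (by positivity)
        rw [Real.log_div (by linarith) (by linarith)] at this
        have heq : (y:ℝ)/((y:ℝ)+1) - 1 = -(1/((y:ℝ)+1)) := by field_simp; ring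
        rw [Real.log_div (by linarith) (by linarith)]
        nlinarith [this, heq]
      calc ∑ m ∈ Icc 2 y, (1:ℝ)/(m:ℝ) + 1/((y+1:ℕ):ℝ)
          ≤ Real.log y + (Real.log ((y+1:ℕ):ℝ) - Real.log y) := by
            exact add_le_add ih hstep
        _ = Real.log ((y+1:ℕ):ℝ) := by ring

-- Rankin's trick: count of y-smooth numbers up to M
lemma rankin_card_le (y M : ℕ) {σ : ℝ} (hσ0 : 0 < σ) :
    (((Icc 1 M).filter (· ∈ Nat.smoothNumbers y)).card : ℝ)
      ≤ (M:ℝ) ^ σ * ∏ p ∈ y.primesBelow, (1 - (p:ℝ) ^ (-σ))⁻¹ := by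
  set f : ℕ → ℝ := fun n => (n:ℝ) ^ (-σ) with hf
  have hf₁ : f 1 = 1 := by simp [hf]
  have hmul : ∀ {m n : ℕ}, Nat.Coprime m n → f (m*n) = f m * f n := by
    intro m n _
    simp only [hf, Nat.cast_mul]
    exact Real.mul_rpow (by positivity) (by positivity)
  have hpow : ∀ (p k : ℕ), f (p ^ k) = ((p:ℝ) ^ (-σ)) ^ k := by
    intro p k
    simp only [hf, Nat.cast_pow]
    rw [← Real.rpow_natCast ((p:ℝ)) k, ← Real.rpow_mul (by positivity), mul_comm,
      Real.rpow_mul (by positivity), Real.rpow_natCast]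
  have hr : ∀ p : ℕ, p.Prime → 0 ≤ (p:ℝ) ^ (-σ) ∧ (p:ℝ) ^ (-σ) < 1 := by
    intro p hp
    refine ⟨by positivity, ?_⟩
    exact Real.rpow_lt_one_of_one_lt_of_neg (by exact_mod_cast hp.one_lt) (by linarith)
  have hsum : ∀ {p : ℕ}, p.Prime → Summable (fun n : ℕ ↦ ‖f (p ^ n)‖) := by
    intro p hp
    simp only [hpow]
    obtain ⟨h0, h1⟩ := hr p hp
    exact (summable_geometric_of_lt_one h0 h1).abs
  have key := (EulerProduct.summable_and_hasSum_smoothNumbers_prod_primesBelow_tsum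
    hf₁ hmul hsum y).2
  have hts : ∀ p ∈ y.primesBelow, ∑' n : ℕ, f (p ^ n) = (1 - (p:ℝ) ^ (-σ))⁻¹ := by
    intro p hp
    obtain ⟨h0, h1⟩ := hr p (Nat.prime_of_mem_primesBelow hp)
    simp only [hpow]
    exact tsum_geometric_of_lt_one h0 h1
  rw [Finset.prod_congr rfl hts] at key
  -- partial sum over our finset
  have hsub : ∑ n ∈ (Icc 1 M).filter (· ∈ Nat.smoothNumbers y), f n
      ≤ ∏ p ∈ y.primesBelow, (1 - (p:ℝ) ^ (-σ))⁻¹ := by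
    rw [← Finset.sum_subtype_eq_sum_filter]
    exact sum_le_hasSum _ (fun i _ => by positivity) key
  calc (((Icc 1 M).filter (· ∈ Nat.smoothNumbers y)).card : ℝ)
      = ∑ n ∈ (Icc 1 M).filter (· ∈ Nat.smoothNumbers y), (1:ℝ) := by
        simp
    _ ≤ ∑ n ∈ (Icc 1 M).filter (· ∈ Nat.smoothNumbers y), (M:ℝ) ^ σ * f n := by
        refine Finset.sum_le_sum fun n hn => ?_
        simp only [mem_filter, mem_Icc] at hn
        obtain ⟨⟨hn1, hnM⟩, _⟩ := hn
        have hn0 : (0:ℝ) < (n:ℝ) := by exact_mod_cast hn1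
        have hMn : (n:ℝ) ≤ (M:ℝ) := by exact_mod_cast hnM
        have : (1:ℝ) ≤ ((M:ℝ)/(n:ℝ)) ^ σ :=
          Real.one_le_rpow ((le_div_iff₀ hn0).mpr (by linarith)) hσ0.le
        calc (1:ℝ) ≤ ((M:ℝ)/(n:ℝ)) ^ σ := this
          _ = (M:ℝ) ^ σ * f n := by
              rw [Real.div_rpow (by positivity) hn0.le, hf]
              simp only [Real.rpow_neg hn0.le]
              ring
    _ = (M:ℝ) ^ σ * ∑ n ∈ (Icc 1 M).filter (· ∈ Nat.smoothNumbers y), f n := by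
        rw [Finset.mul_sum]
    _ ≤ (M:ℝ) ^ σ * ∏ p ∈ y.primesBelow, (1 - (p:ℝ) ^ (-σ))⁻¹ := by
        refine mul_le_mul_of_nonneg_left hsub (by positivity)

lemma log_ge_two {y : ℕ} (hy : 8 ≤ y) : 2 ≤ Real.log y := by
  have hy0 : (0:ℝ) < (y:ℝ) := by positivity
  rw [Real.le_log_iff_exp_le hy0]
  have h1 : Real.exp 1 < 2.7182818286 := Real.exp_one_lt_d9
  have h2 : Real.exp 2 = Real.exp 1 * Real.exp 1 := by
    rw [← Real.exp_add]; norm_num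
  have hy8 : (8:ℝ) ≤ (y:ℝ) := by exact_mod_cast hy
  nlinarith [Real.exp_pos 1]

lemma prod_euler_le {y : ℕ} (hy : 8 ≤ y) :
    ∏ p ∈ y.primesBelow, (1 - (p:ℝ) ^ (-(1 - 1/Real.log y)))⁻¹
      ≤ Real.exp (12 * Real.log y) := by
  set σ : ℝ := 1 - 1/Real.log y with hσdef
  have hl2 : 2 ≤ Real.log y := log_ge_two hy
  have hl0 : 0 < Real.log y := by linarith
  have hσhalf : (1:ℝ)/2 ≤ σ := by
    rw [hσdef]
    have : 1/Real.log y ≤ 1/2 := by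
      rw [div_le_div_iff₀ hl0 (by norm_num)]; linarith
    linarith
  have hσ1 : σ ≤ 1 := by
    rw [hσdef]
    have : 0 ≤ 1/Real.log y := by positivity
    linarith
  have hy0 : (0:ℝ) < (y:ℝ) := by positivity
  -- pointwise facts
  have hpt : ∀ p ∈ y.primesBelow, (0:ℝ) ≤ (p:ℝ) ^ (-σ) ∧ (p:ℝ) ^ (-σ) ≤ 3/4 := by
    intro p hp
    have hpp := Nat.prime_of_mem_primesBelow hp
    have hp2 : (2:ℝ) ≤ (p:ℝ) := by exact_mod_cast hpp.two_le
    refine ⟨by positivity, ?_⟩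
    have h1 : (p:ℝ) ^ (-σ) = ((p:ℝ) ^ σ)⁻¹ := by
      rw [Real.rpow_neg (by positivity)]
    have h2 : (2:ℝ) ^ σ ≤ (p:ℝ) ^ σ :=
      Real.rpow_le_rpow (by norm_num) hp2 ((by norm_num : (0:ℝ) ≤ 1/2).trans hσhalf)
    have h3 : (2:ℝ) ^ ((1:ℝ)/2) ≤ (2:ℝ) ^ σ :=
      Real.rpow_le_rpow_of_exponent_le (by norm_num) hσhalf
    have h4 : (4:ℝ)/3 ≤ (2:ℝ) ^ ((1:ℝ)/2) := by
      rw [← Real.sqrt_eq_rpow]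
      rw [show (4:ℝ)/3 = Real.sqrt ((4/3)^2) by
        rw [Real.sqrt_sq (by norm_num)]]
      exact Real.sqrt_le_sqrt (by norm_num)
    have h5 : (4:ℝ)/3 ≤ (p:ℝ) ^ σ := by linarith
    rw [h1]
    rw [inv_eq_one_div, div_le_iff₀ (by linarith)]
    nlinarith
  calc ∏ p ∈ y.primesBelow, (1 - (p:ℝ) ^ (-σ))⁻¹
      ≤ ∏ p ∈ y.primesBelow, Real.exp (4 * (p:ℝ) ^ (-σ)) := by
        refine Finset.prod_le_prod (fun p hp => ?_) (fun p hp => ?_)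
        · obtain ⟨h0, h34⟩ := hpt p hp
          exact inv_nonneg.mpr (by linarith)
        · obtain ⟨h0, h34⟩ := hpt p hp
          have step1 : (1 - (p:ℝ) ^ (-σ))⁻¹ ≤ 1 + 4 * (p:ℝ) ^ (-σ) := by
            rw [inv_eq_one_div, div_le_iff₀ (by linarith)]
            nlinarith
          have step2 : 1 + 4 * (p:ℝ) ^ (-σ) ≤ Real.exp (4 * (p:ℝ) ^ (-σ)) := by
            have := Real.add_one_le_exp (4 * (p:ℝ) ^ (-σ))
            linarith
          linarith
    _ = Real.exp (∑ p ∈ y.primesBelow, 4 * (p:ℝ) ^ (-σ)) := by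
        rw [Real.exp_sum]
    _ ≤ Real.exp (12 * Real.log y) := by
        apply Real.exp_le_exp.mpr
        rw [← Finset.mul_sum]
        have hsub : ∑ p ∈ y.primesBelow, (p:ℝ) ^ (-σ) ≤ ∑ m ∈ Icc 2 y, (m:ℝ) ^ (-σ) := by
          apply Finset.sum_le_sum_of_subset_of_nonneg
          · intro p hp
            have hpp := Nat.prime_of_mem_primesBelow hp
            have := Nat.lt_of_mem_primesBelow hp
            exact mem_Icc.mpr ⟨hpp.two_le, by omega⟩
          · intro m _ _; positivity
        have hterm : ∀ m ∈ Icc 2 y, (m:ℝ) ^ (-σ) ≤ 3 * (1/(m:ℝ)) := by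
          intro m hm
          rw [mem_Icc] at hm
          have hm0 : (0:ℝ) < (m:ℝ) := by
            have : (2:ℝ) ≤ (m:ℝ) := by exact_mod_cast hm.1
            linarith
          have hmy : (m:ℝ) ≤ (y:ℝ) := by exact_mod_cast hm.2
          have hdecomp : (m:ℝ) ^ (-σ) = (m:ℝ)⁻¹ * (m:ℝ) ^ (1/Real.log y) := by
            rw [show -σ = (-1) + 1/Real.log y by rw [hσdef]; ring]
            rw [Real.rpow_add hm0, Real.rpow_neg_one]
          have hmono : (m:ℝ) ^ ((1:ℝ)/Real.log y) ≤ (y:ℝ) ^ ((1:ℝ)/Real.log y) :=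
            Real.rpow_le_rpow hm0.le hmy (by positivity)
          have hye : (y:ℝ) ^ ((1:ℝ)/Real.log y) = Real.exp 1 := by
            rw [Real.rpow_def_of_pos hy0, mul_one_div, div_self (ne_of_gt hl0)]
          have he3 : Real.exp 1 ≤ 3 := by
            have := Real.exp_one_lt_d9
            linarith
          rw [hdecomp]
          rw [inv_eq_one_div]
          calc 1/(m:ℝ) * (m:ℝ) ^ ((1:ℝ)/Real.log y)
              ≤ 1/(m:ℝ) * 3 := by
                apply mul_le_mul_of_nonneg_left _ (by positivity)
                rw [hye] at hmono
                linarith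
            _ = 3 * (1/(m:ℝ)) := by ring
        have hharm : ∑ m ∈ Icc 2 y, (1:ℝ)/(m:ℝ) ≤ Real.log y := sum_inv_le_log y
        calc 4 * ∑ p ∈ y.primesBelow, (p:ℝ) ^ (-σ)
            ≤ 4 * ∑ m ∈ Icc 2 y, (m:ℝ) ^ (-σ) := by linarith
          _ ≤ 4 * ∑ m ∈ Icc 2 y, 3 * (1/(m:ℝ)) := by
              have := Finset.sum_le_sum hterm
              linarith
          _ = 12 * ∑ m ∈ Icc 2 y, (1/(m:ℝ)) := by
              rw [← Finset.mul_sum]; ring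
          _ ≤ 12 * Real.log y := by linarith

lemma smooth_card_le (y M : ℕ) (hy : 8 ≤ y) :
    (((Icc 1 M).filter (· ∈ Nat.smoothNumbers y)).card : ℝ)
      ≤ (M:ℝ) ^ (1 - 1/Real.log y) * Real.exp (12 * Real.log y) := by
  have hlogy2 : 2 ≤ Real.log y := log_ge_two hy
  have hσ0 : 0 < 1 - 1/Real.log y := by
    have : 1/Real.log y ≤ 1/2 := by
      rw [div_le_div_iff₀ (by linarith) (by norm_num)]; linarith
    linarith
  refine (rankin_card_le y M hσ0).trans ?_
  exact mul_le_mul_of_nonneg_left (prod_euler_le hy)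
    (Real.rpow_nonneg (Nat.cast_nonneg M) _)


lemma card_sq_divisors_le (N T : ℕ) (hT : 1 ≤ T) (s : Finset ℕ)
    [DecidablePred fun n : ℕ => ∃ q, q.Prime ∧ T < q ∧ q*q ∣ n]
    (hs : ∀ n ∈ s, 2 ≤ n ∧ n ≤ N) :
    ((s.filter (fun n => ∃ q, q.Prime ∧ T < q ∧ q*q ∣ n)).card : ℝ) ≤ (N:ℝ)/(T:ℝ) := by
  have hsub : s.filter (fun n => ∃ q, q.Prime ∧ T < q ∧ q*q ∣ n)
      ⊆ (Icc (T+1) N).biUnion (fun q => (Ioc 0 N).filter (fun m => q^2 ∣ m)) := by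
    intro n hn
    rw [mem_filter] at hn
    obtain ⟨hns, q, hq, hTq, hdvd⟩ := hn
    obtain ⟨hn2, hnN⟩ := hs n hns
    have hn0 : 0 < n := by omega
    have hqq : q*q ≤ n := Nat.le_of_dvd hn0 hdvd
    have hq1 : 1 ≤ q := hq.one_lt.le
    have hqN : q ≤ N := by nlinarith
    refine mem_biUnion.mpr ⟨q, mem_Icc.mpr ⟨by omega, hqN⟩,
      mem_filter.mpr ⟨mem_Ioc.mpr ⟨hn0, hnN⟩, by rwa [sq]⟩⟩
  calc ((s.filter (fun n => ∃ q, q.Prime ∧ T < q ∧ q*q ∣ n)).card : ℝ)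
      ≤ (((Icc (T+1) N).biUnion (fun q => (Ioc 0 N).filter (fun m => q^2 ∣ m))).card : ℝ) := by
        exact_mod_cast Finset.card_le_card hsub
    _ ≤ ∑ q ∈ Icc (T+1) N, (((Ioc 0 N).filter (fun m => q^2 ∣ m)).card : ℝ) := by
        exact_mod_cast Finset.card_biUnion_le
    _ = ∑ q ∈ Icc (T+1) N, ((N / q^2 : ℕ) : ℝ) := by
        refine Finset.sum_congr rfl fun q _ => ?_
        rw [Nat.Ioc_filter_dvd_card_eq_div]
    _ ≤ ∑ q ∈ Icc (T+1) N, (N:ℝ) / ((q:ℝ))^2 := by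
        refine Finset.sum_le_sum fun q hq => ?_
        calc ((N / q^2 : ℕ) : ℝ) ≤ (N:ℝ)/((q^2 : ℕ):ℝ) := Nat.cast_div_le
          _ = (N:ℝ)/((q:ℝ))^2 := by push_cast; ring
    _ = (N:ℝ) * ∑ q ∈ Icc (T+1) N, (1:ℝ)/((q:ℝ))^2 := by
        rw [Finset.mul_sum]
        refine Finset.sum_congr rfl fun q _ => by ring
    _ ≤ (N:ℝ) * (1/(T:ℝ)) := by
        refine mul_le_mul_of_nonneg_left (sum_inv_sq_le_s4 T hT N) (by positivity)
    _ = (N:ℝ)/(T:ℝ) := by ring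

lemma ev_sq (K : ℝ) : ∀ᶠ t : ℝ in atTop, K * (Real.log t)^2 ≤ t := by
  set K' := max K 1 with hK'
  have hK1 : 1 ≤ K' := le_max_right _ _
  have hK0 : 0 < K' := by linarith
  filter_upwards [eventually_ge_atTop (1:ℝ), eventually_ge_atTop (256*K'^2)] with t h1 h2
  have ht0 : 0 < t := by linarith
  have hlog0 : 0 ≤ Real.log t := Real.log_nonneg h1
  -- log t ≤ 4 * t^(1/4)
  have h4 : Real.log t ≤ 4 * t ^ ((1:ℝ)/4) := by
    have := Real.log_rpow ht0 ((1:ℝ)/4)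
    have h5 := Real.log_le_sub_one_of_pos (x := t ^ ((1:ℝ)/4)) (by positivity)
    nlinarith [this, h5]
  have hq : (Real.log t)^2 ≤ 16 * t ^ ((1:ℝ)/2) := by
    have hsq : (t ^ ((1:ℝ)/4)) * (t ^ ((1:ℝ)/4)) = t ^ ((1:ℝ)/2) := by
      rw [← Real.rpow_add ht0]; norm_num
    nlinarith [Real.rpow_nonneg ht0.le ((1:ℝ)/4)]
  have hsqrt : t ^ ((1:ℝ)/2) = Real.sqrt t := (Real.sqrt_eq_rpow t).symm
  have h16 : 16 * K' ≤ Real.sqrt t := by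
    have : Real.sqrt (256*K'^2) ≤ Real.sqrt t := Real.sqrt_le_sqrt h2
    have heq : Real.sqrt (256*K'^2) = 16*K' := by
      rw [show 256*K'^2 = (16*K')^2 by ring, Real.sqrt_sq (by linarith)]
    linarith
  have hst : Real.sqrt t * Real.sqrt t = t := Real.mul_self_sqrt ht0.le
  have hKK' : K ≤ K' := le_max_left _ _
  have hsqrt0 : 0 ≤ Real.sqrt t := Real.sqrt_nonneg t
  calc K * (Real.log t)^2 ≤ K' * (Real.log t)^2 := by nlinarith [sq_nonneg (Real.log t)]
    _ ≤ K' * (16 * Real.sqrt t) := by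
        rw [← hsqrt]
        nlinarith
    _ = (16*K') * Real.sqrt t := by ring
    _ ≤ Real.sqrt t * Real.sqrt t := by nlinarith
    _ = t := hst





set_option maxHeartbeats 1000000 in
/-- For `α > 0` and any `A > 0`, the contribution of non-squarefree integers to
`Σ_{1 < n ≤ x} (p(n)/P(n))^α` is `O(x/(log x)^A)`. -/
theorem non_squarefree_ratio_sum_negligible
    (α : ℝ) (hα : 0 < α) (A : ℝ) (hA : 0 < A) :
    (fun x : ℝ =>
        ∑ n ∈ (Finset.Icc 2 ⌊x⌋₊).filter (fun n => ¬Squarefree n),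
          ((n.minFac : ℝ) / ((n.primeFactors.sup id : ℕ) : ℝ)) ^ α)
      =O[atTop] (fun x : ℝ => x / Real.log x ^ A) := by
  classical
  have hAα : 0 < A/α := div_pos hA hα
  set B : ℝ := A + A/α + 2 with hBdef
  have hB2 : 2 ≤ B := by rw [hBdef]; linarith
  set K : ℝ := B * (A + 12*B) with hKdef
  rw [Asymptotics.isBigO_iff]
  refine ⟨3, ?_⟩
  have hev1 : ∀ᶠ x : ℝ in atTop, 18 ≤ Real.log x :=
    Real.tendsto_log_atTop.eventually_ge_atTop 18
  have hev2 : ∀ᶠ x : ℝ in atTop, K * (Real.log (Real.log x))^2 ≤ Real.log x :=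
    Real.tendsto_log_atTop.eventually (ev_sq K)
  filter_upwards [hev1, hev2, eventually_ge_atTop (1:ℝ)] with x hL18 hbig hx1
  set L := Real.log x with hLdef
  have hL1 : (1:ℝ) ≤ L := by linarith
  have hL0 : (0:ℝ) < L := by linarith
  have hx0 : (0:ℝ) < x := by linarith
  set N := ⌊x⌋₊ with hNdef
  have hNx : (N:ℝ) ≤ x := Nat.floor_le hx0.le
  set T : ℕ := ⌈L ^ A⌉₊ + 16 with hTdef
  set S : ℕ := ⌈L ^ (A/α)⌉₊ + 16 with hSdef
  have hLA1 : (1:ℝ) ≤ L ^ A := Real.one_le_rpow hL1 hA.le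
  have hLAa1 : (1:ℝ) ≤ L ^ (A/α) := Real.one_le_rpow hL1 hAα.le
  have hLA0 : (0:ℝ) < L ^ A := by positivity
  have hLAa0 : (0:ℝ) < L ^ (A/α) := by positivity
  have hTge : L ^ A ≤ (T:ℝ) := by
    refine le_trans (Nat.le_ceil _) ?_
    rw [hTdef]; push_cast; linarith
  have hSge : L ^ (A/α) ≤ (S:ℝ) := by
    refine le_trans (Nat.le_ceil _) ?_
    rw [hSdef]; push_cast; linarith
  have hTle : (T:ℝ) ≤ L ^ A + 17 := by
    have := (Nat.ceil_lt_add_one (le_of_lt hLA0)).le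
    rw [hTdef]; push_cast; linarith
  have hSle : (S:ℝ) ≤ L ^ (A/α) + 17 := by
    have := (Nat.ceil_lt_add_one (le_of_lt hLAa0)).le
    rw [hSdef]; push_cast; linarith
  have hT16 : 16 ≤ T := Nat.le_add_left 16 _
  have hS16 : 16 ≤ S := Nat.le_add_left 16 _
  set y : ℕ := T * S with hydef
  have hy8 : 8 ≤ y := le_trans (by norm_num) (Nat.mul_le_mul hT16 hS16)
  have hy0 : (0:ℝ) < (y:ℝ) := by
    have : (0:ℕ) < y := by omega
    exact_mod_cast this
  have hL2_324 : (324:ℝ) ≤ L * L := by nlinarith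
  have hyle : (y:ℝ) ≤ L ^ B := by
    have hcast : (y:ℝ) = (T:ℝ) * (S:ℝ) := by rw [hydef]; exact Nat.cast_mul T S
    have h1 : (y:ℝ) ≤ (L^A + 17) * (L^(A/α) + 17) := by
      rw [hcast]
      have h0T : (0:ℝ) ≤ (T:ℝ) := by positivity
      nlinarith
    have h2 : (L^A + 17) * (L^(A/α) + 17) ≤ 324 * (L^A * L^(A/α)) := by nlinarith
    have h3 : L^A * L^(A/α) = L^(A + A/α) := (Real.rpow_add hL0 _ _).symm
    have h4 : L ^ B = L^(A + A/α) * L^(2:ℝ) := by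
      rw [hBdef, ← Real.rpow_add hL0]
    have h5 : L^(2:ℝ) = L * L := by
      rw [show (2:ℝ) = ((2:ℕ):ℝ) by norm_num, Real.rpow_natCast]; ring
    have h6 : (0:ℝ) < L^(A+A/α) := by positivity
    rw [h4, h5]
    nlinarith
  have hlogy2 : 2 ≤ Real.log y := log_ge_two hy8
  have hlogy0 : (0:ℝ) < Real.log y := by linarith
  have hlogL1 : 1 ≤ Real.log L := by
    rw [Real.le_log_iff_exp_le hL0]
    have := Real.exp_one_lt_d9
    linarith
  have hlogL0 : (0:ℝ) < Real.log L := by linarith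
  have hlogyB : Real.log y ≤ B * Real.log L := by
    calc Real.log y ≤ Real.log (L ^ B) := Real.log_le_log hy0 hyle
      _ = B * Real.log L := Real.log_rpow hL0 B
  -- pointwise facts
  have hfacts : ∀ n : ℕ, 2 ≤ n →
      n.minFac ≤ n.primeFactors.sup id ∧ 2 ≤ n.primeFactors.sup id := by
    intro n hn
    have hp : n.minFac.Prime := Nat.minFac_prime (by omega)
    have hmem : n.minFac ∈ n.primeFactors :=
      Nat.mem_primeFactors.mpr ⟨hp, Nat.minFac_dvd n, by omega⟩
    have hle := Finset.le_sup (f := id) hmem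
    exact ⟨hle, le_trans hp.two_le hle⟩
  set f : ℕ → ℝ := fun n => ((n.minFac : ℝ) / ((n.primeFactors.sup id : ℕ) : ℝ)) ^ α
    with hfdef
  have hf0 : ∀ n, 0 ≤ f n := fun n => Real.rpow_nonneg (by positivity) _
  have hf1 : ∀ n, 2 ≤ n → f n ≤ 1 := by
    intro n hn
    obtain ⟨h1, h2⟩ := hfacts n hn
    have hs0 : (0:ℝ) < ((n.primeFactors.sup id : ℕ) : ℝ) := by
      exact_mod_cast lt_of_lt_of_le (by norm_num) h2
    refine Real.rpow_le_one (by positivity) ?_ hα.le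
    rw [div_le_one hs0]
    exact_mod_cast h1
  set s : Finset ℕ := (Icc 2 N).filter (fun n => ¬Squarefree n) with hsdef
  have hmem_s : ∀ n ∈ s, 2 ≤ n ∧ n ≤ N ∧ ¬Squarefree n := by
    intro n hn
    rw [hsdef, mem_filter, mem_Icc] at hn
    exact ⟨hn.1.1, hn.1.2, hn.2⟩
  set P1 : ℕ → Prop := fun n => ∃ q, q.Prime ∧ T < q ∧ q*q ∣ n with hP1def
  set P2 : ℕ → Prop := fun n => y ≤ n.primeFactors.sup id with hP2def
  have hsplit1 : ∑ n ∈ s, f n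
      = ∑ n ∈ s.filter P1, f n + ∑ n ∈ s.filter (fun n => ¬ P1 n), f n :=
    (Finset.sum_filter_add_sum_filter_not s P1 f).symm
  have hsplit2 : ∑ n ∈ s.filter (fun n => ¬ P1 n), f n
      = ∑ n ∈ (s.filter (fun n => ¬ P1 n)).filter P2, f n
        + ∑ n ∈ (s.filter (fun n => ¬ P1 n)).filter (fun n => ¬ P2 n), f n :=
    (Finset.sum_filter_add_sum_filter_not _ P2 f).symm
  have hxLA : (0:ℝ) ≤ x / L ^ A := by positivity
  -- Bound 1
  have hb1 : ∑ n ∈ s.filter P1, f n ≤ x / L ^ A := by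
    calc ∑ n ∈ s.filter P1, f n ≤ ∑ n ∈ s.filter P1, 1 := by
          refine Finset.sum_le_sum fun n hn => ?_
          exact hf1 n (hmem_s n (Finset.mem_of_mem_filter n hn)).1
      _ = ((s.filter P1).card : ℝ) := by simp
      _ ≤ (N:ℝ)/(T:ℝ) := by
          exact card_sq_divisors_le N T (by omega) s fun n hn =>
            ⟨(hmem_s n hn).1, (hmem_s n hn).2.1⟩
      _ ≤ x / L ^ A := div_le_div₀ hx0.le hNx hLA0 hTge
  -- Bound 2
  have hb2 : ∑ n ∈ (s.filter (fun n => ¬ P1 n)).filter P2, f n ≤ x / L ^ A := by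
    have hterm : ∀ n ∈ (s.filter (fun n => ¬ P1 n)).filter P2, f n ≤ L ^ (-A) := by
      intro n hn
      rw [mem_filter, mem_filter] at hn
      obtain ⟨⟨hns, hnp1⟩, hnp2⟩ := hn
      obtain ⟨hn2, hnN, hnsf⟩ := hmem_s n hns
      obtain ⟨q, hq, hqq⟩ : ∃ q, Prime q ∧ q * q ∣ n := by
        by_contra hc
        push_neg at hc
        exact hnsf (Nat.squarefree_iff_prime_squarefree.mpr (fun p hp => hc p hp.prime))
      have hqnat : q.Prime := Nat.prime_iff.mpr hq
      have hqT : q ≤ T := by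
        by_contra hc
        exact hnp1 ⟨q, hqnat, by omega, hqq⟩
      have hminq : n.minFac ≤ q :=
        Nat.minFac_le_of_dvd hqnat.two_le (dvd_trans (Dvd.intro q rfl) hqq)
      have hminT : (n.minFac : ℝ) ≤ (T:ℝ) := by exact_mod_cast le_trans hminq hqT
      have hPy : ((T:ℝ) * (S:ℝ)) ≤ ((n.primeFactors.sup id : ℕ) : ℝ) := by
        have h' : y ≤ n.primeFactors.sup id := hnp2
        rw [hydef] at h'
        calc (T:ℝ) * (S:ℝ) = ((T*S : ℕ) : ℝ) := by push_cast; ring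
          _ ≤ _ := Nat.cast_le.mpr h'
      have hT0 : (0:ℝ) < (T:ℝ) := by positivity
      have hS0 : (0:ℝ) < (S:ℝ) := by
        have : (0:ℕ) < S := by omega
        exact_mod_cast this
      have hratio : (n.minFac : ℝ) / ((n.primeFactors.sup id : ℕ) : ℝ)
          ≤ 1/(S:ℝ) := by
        calc (n.minFac : ℝ) / ((n.primeFactors.sup id : ℕ) : ℝ)
            ≤ (T:ℝ) / ((T:ℝ) * (S:ℝ)) :=
              div_le_div₀ hT0.le hminT (by positivity) hPy
          _ = 1/(S:ℝ) := by field_simp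
      have hstep1 : f n ≤ ((1:ℝ)/(S:ℝ)) ^ α :=
        Real.rpow_le_rpow (by positivity) hratio hα.le
      have hstep2 : ((1:ℝ)/(S:ℝ)) ^ α ≤ (L ^ (-(A/α))) ^ α := by
        refine Real.rpow_le_rpow (by positivity) ?_ hα.le
        rw [Real.rpow_neg hL0.le]
        rw [one_div]
        exact inv_anti₀ hLAa0 hSge
      have hstep3 : ((L ^ (-(A/α))) ^ α : ℝ) = L ^ (-A) := by
        rw [← Real.rpow_mul hL0.le]
        congr 1
        rw [neg_mul, div_mul_cancel₀ A (ne_of_gt hα)]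
      rw [hstep3] at hstep2
      exact le_trans hstep1 hstep2
    calc ∑ n ∈ (s.filter (fun n => ¬ P1 n)).filter P2, f n
        ≤ ∑ n ∈ (s.filter (fun n => ¬ P1 n)).filter P2, L ^ (-A) :=
          Finset.sum_le_sum hterm
      _ = (((s.filter (fun n => ¬ P1 n)).filter P2).card : ℝ) * L ^ (-A) := by
          rw [Finset.sum_const, nsmul_eq_mul]
      _ ≤ (N:ℝ) * L ^ (-A) := by
          refine mul_le_mul_of_nonneg_right ?_ (by positivity)
          have hcard : ((s.filter (fun n => ¬ P1 n)).filter P2).card ≤ N := by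
            calc ((s.filter (fun n => ¬ P1 n)).filter P2).card
                ≤ (Icc 2 N).card := by
                  refine Finset.card_le_card ?_
                  intro n hn
                  have := hmem_s n (Finset.mem_of_mem_filter n
                    (Finset.mem_of_mem_filter n hn))
                  exact mem_Icc.mpr ⟨this.1, this.2.1⟩
              _ = N + 1 - 2 := Nat.card_Icc 2 N
              _ ≤ N := by omega
          exact_mod_cast hcard
      _ ≤ x * L ^ (-A) := mul_le_mul_of_nonneg_right hNx (by positivity)
      _ = x / L ^ A := by
          rw [Real.rpow_neg hL0.le, div_eq_mul_inv]
  -- Bound 3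
  have hb3 : ∑ n ∈ (s.filter (fun n => ¬ P1 n)).filter (fun n => ¬ P2 n), f n
      ≤ x / L ^ A := by
    set s3 := (s.filter (fun n => ¬ P1 n)).filter (fun n => ¬ P2 n) with hs3def
    have hsub : s3 ⊆ (Icc 1 N).filter (· ∈ Nat.smoothNumbers y) := by
      intro n hn
      rw [hs3def, mem_filter] at hn
      obtain ⟨hn', hnp2⟩ := hn
      obtain ⟨hn2, hnN, _⟩ := hmem_s n (Finset.mem_of_mem_filter n hn')
      rw [mem_filter, mem_Icc]
      refine ⟨⟨by omega, hnN⟩, Nat.mem_smoothNumbers'.mpr fun p hp hpdvd => ?_⟩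
      have hpmem : p ∈ n.primeFactors := Nat.mem_primeFactors.mpr ⟨hp, hpdvd, by omega⟩
      have := Finset.le_sup (f := id) hpmem
      simp only [id_eq] at this
      have hsup : n.primeFactors.sup id < y := lt_of_not_ge hnp2
      omega
    have hcard3 : (s3.card : ℝ)
        ≤ (N:ℝ) ^ (1 - 1/Real.log y) * Real.exp (12 * Real.log y) := by
      calc (s3.card : ℝ) ≤ (((Icc 1 N).filter (· ∈ Nat.smoothNumbers y)).card : ℝ) := by
            exact_mod_cast Finset.card_le_card hsub
        _ ≤ (N:ℝ) ^ (1 - 1/Real.log y) * Real.exp (12 * Real.log y) :=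
            smooth_card_le y N hy8
    have hsum3 : ∑ n ∈ s3, f n ≤ (s3.card : ℝ) := by
      calc ∑ n ∈ s3, f n ≤ ∑ n ∈ s3, 1 := by
            refine Finset.sum_le_sum fun n hn => ?_
            refine hf1 n (hmem_s n ?_).1
            rw [hs3def] at hn
            exact Finset.mem_of_mem_filter n (Finset.mem_of_mem_filter n hn)
        _ = (s3.card : ℝ) := by simp
    have hσ01 : 0 ≤ 1 - 1/Real.log y := by
      have : 1/Real.log y ≤ 1/2 := by
        rw [div_le_div_iff₀ hlogy0 (by norm_num)]; linarith
      linarith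
    have hNσ : (N:ℝ) ^ (1 - 1/Real.log y) ≤ x ^ (1 - 1/Real.log y) :=
      Real.rpow_le_rpow (by positivity) hNx hσ01
    -- the exponential comparison
    have hkey : x ^ (1 - 1/Real.log y) * Real.exp (12 * Real.log y) ≤ x / L ^ A := by
      have hxσ : x ^ (1 - 1/Real.log y) = Real.exp (L * (1 - 1/Real.log y)) := by
        rw [Real.rpow_def_of_pos hx0, hLdef]
      have hxexp : x = Real.exp L := (Real.exp_log hx0).symm
      have hLA : L ^ A = Real.exp (A * Real.log L) := by
        rw [Real.rpow_def_of_pos hL0, mul_comm]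
      rw [hxσ, ← Real.exp_add, hxexp, hLA, ← Real.exp_sub, Real.exp_le_exp]
      have hC4 : 12 * Real.log y + A * Real.log L ≤ L / Real.log y := by
        have h1 : 12 * Real.log y + A * Real.log L ≤ (A + 12*B) * Real.log L := by
          nlinarith
        have h2 : (A + 12*B) * Real.log L ≤ L / (B * Real.log L) := by
          rw [le_div_iff₀ (by positivity)]
          calc (A + 12*B) * Real.log L * (B * Real.log L)
              = K * (Real.log L)^2 := by rw [hKdef]; ring
            _ ≤ L := hbig
        have h3 : L / (B * Real.log L) ≤ L / Real.log (y:ℝ) :=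
          div_le_div_of_nonneg_left hL0.le hlogy0 hlogyB
        exact le_trans h1 (le_trans h2 h3)
      have hexpand : L * (1 - 1/Real.log (y:ℝ)) = L - L/Real.log (y:ℝ) := by
        rw [mul_sub, mul_one, mul_one_div]
      rw [hexpand]
      linarith
    calc ∑ n ∈ s3, f n ≤ (s3.card : ℝ) := hsum3
      _ ≤ (N:ℝ) ^ (1 - 1/Real.log y) * Real.exp (12 * Real.log y) := hcard3
      _ ≤ x ^ (1 - 1/Real.log y) * Real.exp (12 * Real.log y) :=
          mul_le_mul_of_nonneg_right hNσ (by positivity)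
      _ ≤ x / L ^ A := hkey
  -- combine
  have htotal : ∑ n ∈ s, f n ≤ 3 * (x / L ^ A) := by
    rw [hsplit1, hsplit2]
    linarith
  have hnorm1 : ‖∑ n ∈ s, f n‖ = ∑ n ∈ s, f n := by
    rw [Real.norm_eq_abs, abs_of_nonneg (Finset.sum_nonneg fun n _ => hf0 n)]
  have hnorm2 : ‖x / L ^ A‖ = x / L ^ A := by
    rw [Real.norm_eq_abs, abs_of_nonneg hxLA]
  calc ‖∑ n ∈ (Finset.Icc 2 ⌊x⌋₊).filter (fun n => ¬Squarefree n),
        ((n.minFac : ℝ) / ((n.primeFactors.sup id : ℕ) : ℝ)) ^ α‖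
      = ‖∑ n ∈ s, f n‖ := rfl
    _ = ∑ n ∈ s, f n := hnorm1
    _ ≤ 3 * (x / L ^ A) := htotal
    _ = 3 * ‖x / L ^ A‖ := by rw [hnorm2]
end

section
/- Let α > 0 be a real number. Then as x → ∞, ∫₁^{(log x)^{4/α}} dt/(t^{2α+1} · log(√x/t) · log(√x·t)) = (2/α)·1/(log x)^2 + O(1/(log x)^4). -/
open Filter Finset


theorem ptwise_bound (α L t : ℝ) (hα : 0 < α) (hL1 : 1 ≤ L) (ht1 : 1 ≤ t)
    (hu4 : Real.log t ≤ L / 4) :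
    ‖1 / (t ^ (2*α+1) * (L/2 - Real.log t) * (L/2 + Real.log t))
      - (4 / L^2) * t ^ (-(2*α+1))‖
    ≤ (256 / (3 * α^2) / L^4) * t ^ (-(α+1)) := by
  have ht0 : 0 < t := by linarith
  have hL0 : 0 < L := by linarith
  set u := Real.log t with hu
  have hu0 : 0 ≤ u := Real.log_nonneg ht1
  have hP : 0 < t ^ (2*α+1) := Real.rpow_pos_of_pos ht0 _
  have hs : 0 < t ^ α := Real.rpow_pos_of_pos ht0 _
  have h5 : 0 < L/2 - u := by linarith
  have h6 : 0 < L/2 + u := by linarith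
  have hD2 : 0 < (L/2 - u) * (L/2 + u) := mul_pos h5 h6
  have h4 : α * u ≤ 2 * t ^ (α/2) := by
    have h1 := Real.log_le_sub_one_of_pos (Real.rpow_pos_of_pos ht0 (α/2))
    rw [Real.log_rpow ht0] at h1
    have h2 : 0 < t ^ (α/2) := Real.rpow_pos_of_pos ht0 _
    linarith
  have hsq : α^2 * u^2 ≤ 4 * t ^ α := by
    have h3 : t ^ (α/2) * t ^ (α/2) = t ^ α := by
      rw [← Real.rpow_add ht0]; norm_num
    nlinarith [mul_self_le_mul_self (by positivity : (0:ℝ) ≤ α * u) h4]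
  have hneg1 : t ^ (-(2*α+1)) = (t ^ (2*α+1))⁻¹ := Real.rpow_neg ht0.le _
  have hneg2 : t ^ (-(α+1)) = t ^ α / t ^ (2*α+1) := by
    rw [← Real.rpow_sub ht0]; ring_nf
  have key : 1 / (t ^ (2*α+1) * (L/2 - u) * (L/2 + u)) - (4 / L^2) * t ^ (-(2*α+1))
      = 4 * u^2 / (t ^ (2*α+1) * ((L/2-u) * (L/2+u)) * L^2) := by
    rw [hneg1, ← div_eq_mul_inv, div_div, div_sub_div _ _ (by positivity) (by positivity),
      div_eq_div_iff (by positivity) (by positivity)]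
    ring
  rw [key, hneg2, Real.norm_eq_abs,
    abs_of_nonneg (div_nonneg (by positivity)
      (mul_pos (mul_pos hP hD2) (pow_pos hL0 2)).le),
    div_mul_div_comm, div_le_div_iff₀
      (mul_pos (mul_pos hP hD2) (pow_pos hL0 2)) (by positivity)]
  have hA : u^2 ≤ 4/α^2 * t ^ α := by
    rw [div_mul_eq_mul_div, le_div_iff₀ (by positivity)]; nlinarith
  have hB : L^4 ≤ 16/3 * ((L/2-u)*(L/2+u)) * L^2 := by nlinarith [mul_self_le_mul_self hu0 hu4, sq_nonneg L]
  have hAB := mul_le_mul hA hB (by positivity) (by positivity)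
  have hmid := mul_le_mul_of_nonneg_right hAB hP.le
  calc 4 * u^2 * (L^4 * t ^ (2*α+1)) = 4 * (u^2 * L^4 * t ^ (2*α+1)) := by ring
    _ ≤ 4 * ((4/α^2 * t ^ α) * (16/3 * ((L/2-u)*(L/2+u)) * L^2) * t ^ (2*α+1)) := by
        linarith [hmid]
    _ = 256 / (3 * α^2) * t ^ α * (t ^ (2*α+1) * ((L/2-u)*(L/2+u)) * L^2) := by
        field_simp; ring

/-- For `α > 0`,
`∫₁^{(log x)^{4/α}} dt/(t^{2α+1} log(√x/t) log(√x·t))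
  = (2/α)·1/log²x + O(1/log⁴x)` as `x → ∞`. -/
theorem integral_inverse_logs_asymptotic (α : ℝ) (hα : 0 < α) :
    (fun x : ℝ =>
        (∫ t in (1:ℝ)..(Real.log x ^ ((4:ℝ) / α)),
            1 / (t ^ (2 * α + 1) * Real.log (Real.sqrt x / t) *
              Real.log (Real.sqrt x * t)))
        - (2 / α) * (1 / Real.log x ^ 2))
      =O[atTop] (fun x : ℝ => 1 / Real.log x ^ 4) := by
  have hα2 : α ≠ 0 := ne_of_gt hα
  rw [Asymptotics.isBigO_iff]
  refine ⟨256 / (3 * α^2) / α + 2 / α, ?_⟩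
  have hsmall : ∀ᶠ L : ℝ in atTop, 1 ≤ L ∧ (4 / α) * Real.log L ≤ L / 4 := by
    have h := Real.isLittleO_log_id_atTop.def (show (0:ℝ) < α / 16 by positivity)
    filter_upwards [h, eventually_ge_atTop (1:ℝ)] with L hL h1
    refine ⟨h1, ?_⟩
    simp only [Real.norm_eq_abs, id] at hL
    rw [abs_of_nonneg (Real.log_nonneg h1), abs_of_nonneg (by linarith : (0:ℝ) ≤ L)] at hL
    calc (4/α) * Real.log L ≤ (4/α) * (α/16 * L) := by gcongr
      _ = L / 4 := by field_simp; ring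
  filter_upwards [Real.tendsto_log_atTop.eventually hsmall, eventually_gt_atTop (1:ℝ)]
    with x hx hx1
  obtain ⟨hL1, hlog⟩ := hx
  set L := Real.log x with hLdef
  have hL0 : 0 < L := lt_of_lt_of_le one_pos hL1
  have hx0 : 0 < x := lt_trans one_pos hx1
  set T := L ^ ((4:ℝ)/α) with hTdef
  have hT1 : 1 ≤ T := Real.one_le_rpow hL1 (by positivity)
  have hT0 : 0 < T := lt_of_lt_of_le one_pos hT1
  have hlogT : Real.log T ≤ L / 4 := by
    rw [hTdef, Real.log_rpow hL0]; exact hlog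
  have hsx : Real.log (Real.sqrt x) = L / 2 := by
    rw [Real.log_sqrt hx0.le]
  have hu4 : ∀ t ∈ Set.Icc (1:ℝ) T, Real.log t ≤ L / 4 := fun t ht =>
    le_trans (Real.log_le_log (lt_of_lt_of_le one_pos ht.1) ht.2) hlogT
  -- the two comparison functions
  set f₀ : ℝ → ℝ := fun t => 1 / (t ^ (2*α+1) * (L/2 - Real.log t) * (L/2 + Real.log t))
    with hf₀def
  set g : ℝ → ℝ := fun t => (4 / L^2) * t ^ (-(2*α+1)) with hgdef
  set b : ℝ → ℝ := fun t => (256 / (3 * α^2) / L^4) * t ^ (-(α+1)) with hbdef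
  have hzero : (0:ℝ) ∉ Set.uIcc (1:ℝ) T := by
    rw [Set.uIcc_of_le hT1]; rintro ⟨h01, -⟩; norm_num at h01
  -- rewrite the integrand
  have hIeq : (∫ t in (1:ℝ)..T,
      1 / (t ^ (2*α+1) * Real.log (Real.sqrt x / t) * Real.log (Real.sqrt x * t)))
      = ∫ t in (1:ℝ)..T, f₀ t := by
    refine intervalIntegral.integral_congr ?_
    intro t ht
    rw [Set.uIcc_of_le hT1] at ht
    have ht0 : 0 < t := lt_of_lt_of_le one_pos ht.1
    rw [hf₀def]
    simp only
    rw [Real.log_div (Real.sqrt_ne_zero'.2 hx0) (ne_of_gt ht0),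
      Real.log_mul (Real.sqrt_ne_zero'.2 hx0) (ne_of_gt ht0), hsx]
  -- integrability
  have hf_int : IntervalIntegrable f₀ MeasureTheory.volume 1 T := by
    apply ContinuousOn.intervalIntegrable
    rw [Set.uIcc_of_le hT1]
    have hlogc : ContinuousOn Real.log (Set.Icc (1:ℝ) T) :=
      Real.continuousOn_log.mono (fun t ht => by
        simp only [Set.mem_compl_iff, Set.mem_singleton_iff]
        exact ne_of_gt (lt_of_lt_of_le one_pos ht.1))
    apply ContinuousOn.div continuousOn_const
    · exact ((continuousOn_id.rpow_const (fun t ht =>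
        Or.inl (ne_of_gt (lt_of_lt_of_le one_pos ht.1)))).mul
        (continuousOn_const.sub hlogc)).mul (continuousOn_const.add hlogc)
    · intro t ht
      have ht0 : 0 < t := lt_of_lt_of_le one_pos ht.1
      have h1 := hu4 t ht
      have h2 : 0 ≤ Real.log t := Real.log_nonneg ht.1
      have hP : 0 < t ^ (2*α+1) := Real.rpow_pos_of_pos ht0 _
      have : 0 < t ^ (2*α+1) * (L/2 - Real.log t) * (L/2 + Real.log t) :=
        mul_pos (mul_pos hP (by linarith)) (by linarith)
      exact ne_of_gt this
  have hg_int : IntervalIntegrable g MeasureTheory.volume 1 T :=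
    (intervalIntegral.intervalIntegrable_rpow (Or.inr hzero)).const_mul _
  have hb_int : IntervalIntegrable b MeasureTheory.volume 1 T :=
    (intervalIntegral.intervalIntegrable_rpow (Or.inr hzero)).const_mul _
  -- value of ∫ g
  have hTneg : T ^ (-(2*α)) = L ^ (-(8:ℝ)) := by
    rw [hTdef, ← Real.rpow_mul hL0.le]
    congr 1
    field_simp
    ring
  have hg_val : (∫ t in (1:ℝ)..T, g t) = (4 / L^2) * ((1 - L ^ (-(8:ℝ))) / (2*α)) := by
    rw [hgdef]
    simp only
    rw [intervalIntegral.integral_const_mul]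
    congr 1
    rw [integral_rpow (Or.inr ⟨by intro h; apply hα2; linarith [neg_eq_iff_eq_neg.1 h], hzero⟩)]
    have e : -(2*α+1) + 1 = -(2*α) := by ring
    rw [e, Real.one_rpow, hTneg]
    ring
  -- bound for ‖∫g - main term‖
  have hL8 : L ^ (-(8:ℝ)) = 1 / L^(8:ℕ) := by
    rw [Real.rpow_neg hL0.le, one_div]
    congr 1
    rw [← Real.rpow_natCast L 8]
    norm_num
  have hmain : ‖(∫ t in (1:ℝ)..T, g t) - (2/α) * (1/L^2)‖ ≤ (2/α) * (1/L^4) := by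
    rw [hg_val, hL8]
    have hLne : L ≠ 0 := ne_of_gt hL0
    have e1 : (4 / L^2) * ((1 - 1/L^(8:ℕ)) / (2*α)) - (2/α) * (1/L^2)
        = -((2/α) * (1/L^(10:ℕ))) := by
      field_simp
      ring
    rw [e1, norm_neg, Real.norm_eq_abs, abs_of_nonneg (by positivity)]
    apply mul_le_mul_of_nonneg_left _ (by positivity)
    exact one_div_le_one_div_of_le (by positivity) (pow_le_pow_right₀ hL1 (by norm_num))
  -- bound for ‖∫f₀ - ∫g‖
  have hb_val : (∫ t in (1:ℝ)..T, b t)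
      = (256 / (3 * α^2) / L^4) * ((1 - T ^ (-α)) / α) := by
    rw [hbdef]
    simp only
    rw [intervalIntegral.integral_const_mul]
    congr 1
    rw [integral_rpow (Or.inr ⟨by intro h; apply hα2; linarith [neg_eq_iff_eq_neg.1 h], hzero⟩)]
    have e : -(α+1) + 1 = -α := by ring
    rw [e, Real.one_rpow]
    ring
  have hTα : 0 ≤ T ^ (-α) ∧ T ^ (-α) ≤ 1 := by
    constructor
    · positivity
    · rw [Real.rpow_neg hT0.le]
      exact inv_le_one_of_one_le₀ (Real.one_le_rpow hT1 hα.le)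
  have hE : ‖(∫ t in (1:ℝ)..T, f₀ t) - ∫ t in (1:ℝ)..T, g t‖
      ≤ (256 / (3 * α^2) / α) * (1/L^4) := by
    rw [← intervalIntegral.integral_sub hf_int hg_int]
    have hae : ∀ᵐ t ∂(MeasureTheory.volume.restrict (Set.uIoc (1:ℝ) T)),
        ‖f₀ t - g t‖ ≤ b t := by
      filter_upwards [MeasureTheory.self_mem_ae_restrict measurableSet_uIoc] with t ht
      rw [Set.uIoc_of_le hT1] at ht
      exact ptwise_bound α L t hα hL1 ht.1.le (hu4 t ⟨ht.1.le, ht.2⟩)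
    refine le_trans (intervalIntegral.norm_integral_le_abs_of_norm_le hae hb_int) ?_
    rw [hb_val, abs_of_nonneg
      (mul_nonneg (by positivity) (div_nonneg (by linarith [hTα.2]) hα.le))]
    have h1 : (1 - T ^ (-α))/α ≤ 1/α := by gcongr; linarith [hTα.1]
    calc 256 / (3 * α^2) / L^4 * ((1 - T ^ (-α)) / α)
        ≤ 256 / (3 * α^2) / L^4 * (1/α) :=
          mul_le_mul_of_nonneg_left h1 (by positivity)
      _ = 256 / (3 * α^2) / α * (1/L^4) := by ring
  -- final assembly
  rw [hIeq]
  have hnorm : ‖(1:ℝ) / L^4‖ = 1 / L^4 := by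
    rw [Real.norm_eq_abs, abs_of_pos (by positivity)]
  rw [hnorm]
  calc ‖(∫ t in (1:ℝ)..T, f₀ t) - (2/α) * (1/L^2)‖
      = ‖((∫ t in (1:ℝ)..T, f₀ t) - ∫ t in (1:ℝ)..T, g t)
          + ((∫ t in (1:ℝ)..T, g t) - (2/α) * (1/L^2))‖ := by rw [sub_add_sub_cancel]
    _ ≤ ‖(∫ t in (1:ℝ)..T, f₀ t) - ∫ t in (1:ℝ)..T, g t‖
          + ‖(∫ t in (1:ℝ)..T, g t) - (2/α) * (1/L^2)‖ := norm_add_le _ _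
    _ ≤ (256 / (3 * α^2) / α) * (1/L^4) + (2/α) * (1/L^4) := add_le_add hE hmain
    _ = (256 / (3 * α^2) / α + 2/α) * (1/L^4) := by ring
end
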